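/- arXiv:1309.7669 — 4 statements merged into one kernel-verified Lean document; each statement's English description precedes it below -/
import Mathlib

section
/- Let z₁,…,z_m ∈ ℂⁿ and define the linear map A on n×n Hermitian matrices by A(X) = (zᵢ*Xzᵢ)_{i=1}^m ∈ ℝ^m. Let P = e₁e₁*, and for Hermitian X set X_T = PX + XP − PXP and X_{T⊥} = (I−P)X(I−P). Suppose that for some 0 < δ ≤ 3/13: (1) for every Hermitian positive semidefinite X, m⁻¹·Σᵢ|zᵢ*Xzᵢ| ≤ (1+δ)·Tr(X); (2) for every Hermitian X with X = X_T, m⁻¹·Σᵢ|zᵢ*Xzᵢ| ≥ 2(√2−1)(1−δ)·‖X‖_op. Suppose further there exist real numbers λ₁,…,λ_m such that Y := Σᵢ λᵢ zᵢzᵢ* satisfies ‖Y_T − e₁e₁*‖_F ≤ 1/5 and Y_{T⊥} is negative definite on the orthogonal complement of e₁ (i.e., y*Yy < 0 for every nonzero y ∈ ℂⁿ with y ⊥ e₁). Then e₁e₁* is the unique minimizer of: minimize Tr(X) over Hermitian positive semidefinite X subject to zᵢ*Xzᵢ = |⟨zᵢ, e₁⟩|² for all i. -/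
open Matrix Finset
open scoped ComplexOrder

/-- Frobenius norm of a complex matrix. -/
noncomputable def frobNorm {n : ℕ} (X : Matrix (Fin n) (Fin n) ℂ) : ℝ :=
  Real.sqrt (∑ a, ∑ b, ‖X a b‖ ^ 2)

/-- Operator (spectral) norm of a complex matrix, viewed as acting `ℓ² → ℓ²`. -/
noncomputable def opNorm {n : ℕ} (X : Matrix (Fin n) (Fin n) ℂ) : ℝ :=
  ‖LinearMap.toContinuousLinearMap (Matrix.toEuclideanLin X)‖

section SqrtPort
open scoped MatrixOrder

noncomputable def Matrix.PosSemidef.sqrt {n : ℕ} {M : Matrix (Fin n) (Fin n) ℂ}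
    (_h : M.PosSemidef) : Matrix (Fin n) (Fin n) ℂ := CFC.sqrt M

lemma Matrix.PosSemidef.sqrt_mul_self {n : ℕ} {M : Matrix (Fin n) (Fin n) ℂ}
    (h : M.PosSemidef) : h.sqrt * h.sqrt = M := CFC.sqrt_mul_sqrt_self M h.nonneg

lemma Matrix.PosSemidef.posSemidef_sqrt {n : ℕ} {M : Matrix (Fin n) (Fin n) ℂ}
    (h : M.PosSemidef) : h.sqrt.PosSemidef := (CFC.sqrt_nonneg M).posSemidef

end SqrtPort

namespace PhaseAux
variable {n : ℕ}

lemma posSemidef_vecMulVec (v : Fin n → ℂ) : (vecMulVec v (star v)).PosSemidef := by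
  rw [vecMulVec_eq Unit, ← conjTranspose_replicateCol]
  exact posSemidef_self_mul_conjTranspose _

lemma trace_vecMulVec_mul (v : Fin n → ℂ) (H : Matrix (Fin n) (Fin n) ℂ) :
    (vecMulVec v (star v) * H).trace = star v ⬝ᵥ (H *ᵥ v) := by
  simp only [trace, diag_apply, mul_apply, vecMulVec_apply, dotProduct, mulVec, Pi.star_apply]
  rw [Finset.sum_comm]
  refine Finset.sum_congr rfl fun b _ => ?_
  rw [Finset.mul_sum]
  exact Finset.sum_congr rfl fun a _ => by ring

lemma abs_trace_re_mul_le (A B : Matrix (Fin n) (Fin n) ℂ) :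
    |((A * B).trace).re| ≤ frobNorm A * frobNorm B := by
  have h1 : ((A * B).trace).re = ∑ p : Fin n × Fin n, (A p.1 p.2 * B p.2 p.1).re := by
    rw [Matrix.trace]
    simp only [diag_apply, mul_apply]
    rw [Complex.re_sum]
    have h2 : ∀ a : Fin n, (∑ j, A a j * B j a).re = ∑ j, (A a j * B j a).re :=
      fun a => Complex.re_sum _ _
    simp_rw [h2]
    rw [← Finset.sum_product']
    rfl
  rw [h1]
  calc |∑ p : Fin n × Fin n, (A p.1 p.2 * B p.2 p.1).re|
      ≤ ∑ p : Fin n × Fin n, |(A p.1 p.2 * B p.2 p.1).re| := Finset.abs_sum_le_sum_abs _ _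
    _ ≤ ∑ p : Fin n × Fin n, ‖A p.1 p.2‖ * ‖B p.2 p.1‖ := by
        refine Finset.sum_le_sum fun p _ => ?_
        exact le_trans (Complex.abs_re_le_norm _) (le_of_eq (norm_mul _ _))
    _ ≤ Real.sqrt (∑ p : Fin n × Fin n, ‖A p.1 p.2‖ ^ 2) *
        Real.sqrt (∑ p : Fin n × Fin n, ‖B p.2 p.1‖ ^ 2) :=
        Real.sum_mul_le_sqrt_mul_sqrt _ _ _
    _ = frobNorm A * frobNorm B := by
        rw [frobNorm, frobNorm]
        congr 1
        · congr 1
          rw [← Finset.sum_product']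
          rfl
        · congr 1
          rw [Finset.sum_comm, ← Finset.sum_product']
          rfl

lemma opNorm_mulVec (X : Matrix (Fin n) (Fin n) ℂ) (v : Fin n → ℂ) :
    Real.sqrt (∑ a, ‖(X *ᵥ v) a‖ ^ 2) ≤
      opNorm X * Real.sqrt (∑ a, ‖v a‖ ^ 2) := by
  have h := (LinearMap.toContinuousLinearMap (Matrix.toEuclideanLin X)).le_opNorm
    ((WithLp.equiv 2 (Fin n → ℂ)).symm v)
  have e1 : (LinearMap.toContinuousLinearMap (Matrix.toEuclideanLin X))
      ((WithLp.equiv 2 (Fin n → ℂ)).symm v) = (WithLp.equiv 2 (Fin n → ℂ)).symm (X *ᵥ v) := rfl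
  rw [e1, EuclideanSpace.norm_eq, EuclideanSpace.norm_eq] at h
  simp only [WithLp.equiv_symm_apply, PiLp.toLp_apply] at h
  exact h

lemma mul_self_vecMulVec (v : Fin n → ℂ) (hv : star v ⬝ᵥ v = 1) :
    vecMulVec v (star v) * vecMulVec v (star v) = vecMulVec v (star v) := by
  ext a b
  simp only [Matrix.mul_apply, vecMulVec_apply, Pi.star_apply]
  have h : ∀ c : Fin n, v a * star (v c) * (v c * star (v b)) =
      v a * star (v b) * (star (v c) * v c) := fun c => by ring
  rw [Finset.sum_congr rfl fun c _ => h c, ← Finset.mul_sum]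
  have h2 : (∑ c, star (v c) * v c) = star v ⬝ᵥ v := rfl
  rw [h2, hv, mul_one]

lemma quad_vecMulVec (v x : Fin n → ℂ) :
    star x ⬝ᵥ ((vecMulVec v (star v)) *ᵥ x) = (star x ⬝ᵥ v) * (star v ⬝ᵥ x) := by
  simp only [dotProduct, mulVec, vecMulVec_apply, Pi.star_apply]
  rw [Finset.sum_mul_sum]
  refine Finset.sum_congr rfl fun a _ => ?_
  rw [Finset.mul_sum]
  refine Finset.sum_congr rfl fun b _ => ?_
  ring

lemma frobNorm_eq_zero {X : Matrix (Fin n) (Fin n) ℂ} (h : frobNorm X = 0) : X = 0 := by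
  have hn : 0 ≤ ∑ a, ∑ b, ‖X a b‖ ^ 2 :=
    Finset.sum_nonneg fun a _ => Finset.sum_nonneg fun b _ => sq_nonneg _
  have h0 : ∑ a, ∑ b, ‖X a b‖ ^ 2 = 0 := (Real.sqrt_eq_zero hn).mp h
  ext a b
  have h1 := (Finset.sum_eq_zero_iff_of_nonneg
    (fun a _ => Finset.sum_nonneg fun b _ => sq_nonneg (‖X a b‖))).mp h0 a
    (Finset.mem_univ a)
  have h2 := (Finset.sum_eq_zero_iff_of_nonneg
    (fun b _ => sq_nonneg (‖X a b‖))).mp h1 b (Finset.mem_univ b)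
  have h3 : ‖X a b‖ = 0 :=
    pow_eq_zero_iff (n := 2) (by norm_num) |>.mp h2
  simpa using h3

lemma trace_re_psd_sum {M : Matrix (Fin n) (Fin n) ℂ} (h : M.PosSemidef) :
    (M.trace).re = ∑ j, ∑ a, ‖h.sqrt a j‖ ^ 2 := by
  conv_lhs => rw [← h.sqrt_mul_self]
  rw [Matrix.trace, Complex.re_sum]
  refine Finset.sum_congr rfl fun j _ => ?_
  rw [Matrix.diag_apply, Matrix.mul_apply, Complex.re_sum]
  refine Finset.sum_congr rfl fun a _ => ?_
  rw [← h.posSemidef_sqrt.isHermitian.apply a j, Complex.star_def]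
  rw [Complex.norm_conj, Complex.mul_conj, Complex.ofReal_re, ← Complex.sq_norm]

lemma psd_trace_re_nonneg {M : Matrix (Fin n) (Fin n) ℂ} (h : M.PosSemidef) :
    0 ≤ (M.trace).re := by
  rw [trace_re_psd_sum h]
  exact Finset.sum_nonneg fun j _ => Finset.sum_nonneg fun a _ => sq_nonneg _

lemma psd_trace_eq_zero {M : Matrix (Fin n) (Fin n) ℂ} (h : M.PosSemidef)
    (h0 : (M.trace).re = 0) : M = 0 := by
  rw [trace_re_psd_sum h] at h0
  have hS : h.sqrt = 0 := by
    ext a j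
    have h1 := (Finset.sum_eq_zero_iff_of_nonneg
      (fun j _ => Finset.sum_nonneg fun a _ => sq_nonneg (‖h.sqrt a j‖))).mp h0 j
      (Finset.mem_univ j)
    have h2 := (Finset.sum_eq_zero_iff_of_nonneg
      (fun a _ => sq_nonneg (‖h.sqrt a j‖))).mp h1 a (Finset.mem_univ a)
    have h3 : ‖h.sqrt a j‖ = 0 :=
      pow_eq_zero_iff (n := 2) (by norm_num) |>.mp h2
    simpa using h3
  rw [← h.sqrt_mul_self, hS, mul_zero]

lemma numeric_h5c {δ : ℝ} (hδ0 : 0 < δ) (hδ : δ ≤ 3/13) :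
    Real.sqrt 2 * (1 + δ) < 5 * (2 * (Real.sqrt 2 - 1) * (1 - δ)) := by
  have hs2 : Real.sqrt 2 ^ 2 = 2 := Real.sq_sqrt (by norm_num)
  have hsle : Real.sqrt 2 ≤ 3/2 :=
    calc Real.sqrt 2 ≤ Real.sqrt ((3/2)^2) := Real.sqrt_le_sqrt (by norm_num)
      _ = 3/2 := Real.sqrt_sq (by norm_num)
  have hsge : 4/3 ≤ Real.sqrt 2 :=
    calc (4:ℝ)/3 = Real.sqrt ((4/3)^2) := (Real.sqrt_sq (by norm_num)).symm
      _ ≤ Real.sqrt 2 := Real.sqrt_le_sqrt (by norm_num)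
  nlinarith [hs2, hsle, hsge]

lemma numeric_flt {δ f o t : ℝ} (hf : 0 ≤ f) (ho : 0 ≤ o) (ht : 0 < t)
    (hδ0 : 0 < δ) (hδ : δ ≤ 3/13)
    (hkey : 2 * (Real.sqrt 2 - 1) * (1 - δ) * o ≤ (1 + δ) * t)
    (hfo : f ≤ Real.sqrt 2 * o) : f < 5 * t := by
  have hsle : Real.sqrt 2 ≤ 3/2 :=
    calc Real.sqrt 2 ≤ Real.sqrt ((3/2)^2) := Real.sqrt_le_sqrt (by norm_num)
      _ = 3/2 := Real.sqrt_sq (by norm_num)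
  have hsge : 4/3 ≤ Real.sqrt 2 :=
    calc (4:ℝ)/3 = Real.sqrt ((4/3)^2) := (Real.sqrt_sq (by norm_num)).symm
      _ ≤ Real.sqrt 2 := Real.sqrt_le_sqrt (by norm_num)
  have hcpos : 0 < 2 * (Real.sqrt 2 - 1) * (1 - δ) :=
    mul_pos (mul_pos (by norm_num) (by linarith)) (by linarith)
  have h5c := numeric_h5c hδ0 hδ
  have hcf : 2 * (Real.sqrt 2 - 1) * (1 - δ) * f ≤ Real.sqrt 2 * ((1 + δ) * t) :=
    calc 2 * (Real.sqrt 2 - 1) * (1 - δ) * f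
        ≤ 2 * (Real.sqrt 2 - 1) * (1 - δ) * (Real.sqrt 2 * o) :=
          mul_le_mul_of_nonneg_left hfo (le_of_lt hcpos)
      _ = Real.sqrt 2 * (2 * (Real.sqrt 2 - 1) * (1 - δ) * o) := by ring
      _ ≤ Real.sqrt 2 * ((1 + δ) * t) :=
          mul_le_mul_of_nonneg_left hkey (Real.sqrt_nonneg 2)
  nlinarith [hcf, mul_lt_mul_of_pos_right h5c ht, mul_pos hcpos ht, hcpos, hf]

end PhaseAux

/-- the dual-certificate lemma. Under the RIP-1–type conditions (1), (2)
for `δ ∈ (0, 3/13]`, and existence of `Y = Σ λᵢ zᵢzᵢ*` with `‖Y_T − e₁e₁*‖_F ≤ 1/5` and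
`Y` negative definite on `e₁^⊥`, the matrix `e₁e₁*` is the unique minimizer of the
PhaseLift program with measurement vectors `z₁,…,z_m` and signal `e₁`. -/
theorem dual_certificate_implies_unique_minimizer (n m : ℕ) (hn : 0 < n) (hm : 0 < m)
    (z : Fin m → (Fin n → ℂ)) (δ : ℝ) (hδ0 : 0 < δ) (hδ : δ ≤ 3 / 13)
    (e₁ : Fin n → ℂ) (he₁ : e₁ = fun j => if j = ⟨0, hn⟩ then 1 else 0)
    (P : Matrix (Fin n) (Fin n) ℂ) (hP : P = Matrix.vecMulVec e₁ (star e₁))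
    -- (1): for all Hermitian psd `X`, `m⁻¹ Σᵢ |zᵢ*Xzᵢ| ≤ (1+δ)·Tr X`
    (h1 : ∀ X : Matrix (Fin n) (Fin n) ℂ, X.PosSemidef →
      (1 / (m : ℝ)) * ∑ i, ‖star (z i) ⬝ᵥ X.mulVec (z i)‖ ≤
        (1 + δ) * (X.trace).re)
    -- (2): for all Hermitian `X` with `X = X_T`, `m⁻¹ Σᵢ |zᵢ*Xzᵢ| ≥ 2(√2−1)(1−δ)‖X‖_op`
    (h2 : ∀ X : Matrix (Fin n) (Fin n) ℂ, X.IsHermitian →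
      X = P * X + X * P - P * X * P →
      2 * (Real.sqrt 2 - 1) * (1 - δ) * opNorm X ≤
        (1 / (m : ℝ)) * ∑ i, ‖star (z i) ⬝ᵥ X.mulVec (z i)‖)
    -- dual certificate `Y = Σᵢ λᵢ zᵢzᵢ*`
    (lam : Fin m → ℝ) (Y : Matrix (Fin n) (Fin n) ℂ)
    (hY : Y = ∑ i, (lam i : ℂ) • Matrix.vecMulVec (z i) (star (z i)))
    (hYT : frobNorm (P * Y + Y * P - P * Y * P - Matrix.vecMulVec e₁ (star e₁)) ≤ 1 / 5)
    (hYTperp : ∀ y : Fin n → ℂ, y ≠ 0 → star y ⬝ᵥ e₁ = 0 →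
      (star y ⬝ᵥ Y.mulVec y).re < 0) :
    -- conclusion: `e₁e₁*` is feasible and is the unique minimizer of the trace
    ((Matrix.vecMulVec e₁ (star e₁)).PosSemidef ∧
      ∀ i, star (z i) ⬝ᵥ (Matrix.vecMulVec e₁ (star e₁)).mulVec (z i) =
        ((‖star (z i) ⬝ᵥ e₁‖ : ℝ) : ℂ) ^ 2) ∧
    ∀ X : Matrix (Fin n) (Fin n) ℂ, X.PosSemidef →
      (∀ i, star (z i) ⬝ᵥ X.mulVec (z i) =
        ((‖star (z i) ⬝ᵥ e₁‖ : ℝ) : ℂ) ^ 2) →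
      X ≠ Matrix.vecMulVec e₁ (star e₁) →
      ((Matrix.vecMulVec e₁ (star e₁)).trace).re < (X.trace).re := by
  classical
  have he : ∀ j, e₁ j = if j = (⟨0, hn⟩ : Fin n) then 1 else 0 := fun j => by rw [he₁]
  have hee : star e₁ ⬝ᵥ e₁ = 1 := by
    rw [he₁]
    simp [dotProduct]
  have hPsd : P.PosSemidef := hP ▸ PhaseAux.posSemidef_vecMulVec e₁
  have hPherm : P.IsHermitian := hPsd.isHermitian
  have hPP : P * P = P := by
    rw [hP]; exact PhaseAux.mul_self_vecMulVec e₁ hee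
  have hfeas : ∀ i, star (z i) ⬝ᵥ (Matrix.vecMulVec e₁ (star e₁)).mulVec (z i) =
      ((‖star (z i) ⬝ᵥ e₁‖ : ℝ) : ℂ) ^ 2 := by
    intro i
    rw [show (Matrix.vecMulVec e₁ (star e₁)).mulVec (z i)
        = Matrix.vecMulVec e₁ (star e₁) *ᵥ z i from rfl]
    rw [PhaseAux.quad_vecMulVec, Matrix.star_dotProduct]
    rw [show star (star e₁ ⬝ᵥ z i) = (starRingEnd ℂ) (star e₁ ⬝ᵥ z i) from rfl]
    rw [← Complex.normSq_eq_conj_mul_self, Complex.norm_conj, ← Complex.sq_norm,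
      Complex.ofReal_pow]
  refine ⟨⟨hP ▸ hPsd, hfeas⟩, ?_⟩
  intro X hXpsd hXfeas hXne
  set H : Matrix (Fin n) (Fin n) ℂ := X - P with hH
  set HT : Matrix (Fin n) (Fin n) ℂ := P * H + H * P - P * H * P with hHT
  set HTp : Matrix (Fin n) (Fin n) ℂ := H - HT with hHTp
  have hHherm : H.IsHermitian := hXpsd.isHermitian.sub hPherm
  have hAH : ∀ i, star (z i) ⬝ᵥ H *ᵥ (z i) = 0 := by
    intro i
    rw [hH, Matrix.sub_mulVec, dotProduct_sub, hXfeas i, hP, hfeas i, sub_self]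
  have hHsum : H = HT + HTp := by rw [hHTp]; abel
  have hHTpX : HTp = (1 - P) * X * (1 - P) := by
    rw [hHTp, hHT, hH]
    simp only [Matrix.sub_mul, Matrix.mul_sub, Matrix.one_mul, Matrix.mul_one, hPP,
      ← Matrix.mul_assoc]
    abel
  have hHTp_psd : HTp.PosSemidef := by
    rw [hHTpX]
    have h1p : (1 - P : Matrix (Fin n) (Fin n) ℂ)ᴴ = 1 - P := by
      rw [Matrix.conjTranspose_sub, Matrix.conjTranspose_one, hPherm.eq]
    have hh := hXpsd.mul_mul_conjTranspose_same (1 - P)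
    rwa [h1p] at hh
  have hPHT : P * HT = P * H := by
    rw [hHT]
    simp only [Matrix.mul_add, Matrix.mul_sub, ← Matrix.mul_assoc, hPP]
    abel
  have hHTP : HT * P = H * P := by
    rw [hHT]
    simp only [Matrix.add_mul, Matrix.sub_mul, Matrix.mul_assoc, hPP]
    abel
  have hHT_T : HT = P * HT + HT * P - P * HT * P := by
    rw [hPHT, hHTP]
  have hHTherm : HT.IsHermitian := by
    show HTᴴ = HT
    rw [hHT]
    simp only [Matrix.conjTranspose_sub, Matrix.conjTranspose_add, Matrix.conjTranspose_mul,
      hPherm.eq, hHherm.eq, Matrix.mul_assoc]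
    abel
  have hTrYH : (Y * H).trace = 0 := by
    rw [hY, Finset.sum_mul, Matrix.trace_sum]
    refine Finset.sum_eq_zero fun i _ => ?_
    rw [Matrix.smul_mul, Matrix.trace_smul, PhaseAux.trace_vecMulVec_mul, hAH i, smul_zero]
  have hYHT : (Y * HT).trace =
      ((P * Y + Y * P - P * Y * P - P) * HT).trace + (P * HT).trace := by
    have t1 : Y * (P * HT) = (Y * P) * HT := (Matrix.mul_assoc _ _ _).symm
    have t2 : (Y * (HT * P)).trace = ((P * Y) * HT).trace := by
      rw [← Matrix.mul_assoc, Matrix.trace_mul_comm, ← Matrix.mul_assoc]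
    have t3 : (Y * (P * HT * P)).trace = ((P * Y * P) * HT).trace := by
      rw [show Y * (P * HT * P) = (Y * (P * HT)) * P from (Matrix.mul_assoc _ _ _).symm]
      rw [Matrix.trace_mul_comm]
      rw [show P * (Y * (P * HT)) = (P * Y * P) * HT by simp only [Matrix.mul_assoc]]
    calc (Y * HT).trace = (Y * (P * HT + HT * P - P * HT * P)).trace := by rw [← hHT_T]
      _ = (Y * (P * HT)).trace + (Y * (HT * P)).trace - (Y * (P * HT * P)).trace := by
          rw [Matrix.mul_sub, Matrix.mul_add, Matrix.trace_sub, Matrix.trace_add]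
      _ = ((Y * P) * HT).trace + ((P * Y) * HT).trace - ((P * Y * P) * HT).trace := by
          rw [t1, t2, t3]
      _ = ((P * Y + Y * P - P * Y * P - P) * HT).trace + (P * HT).trace := by
          simp only [Matrix.add_mul, Matrix.sub_mul, Matrix.trace_add, Matrix.trace_sub]
          ring
  have hzero : (((P * Y + Y * P - P * Y * P - P) * HT).trace).re
      + ((P * HT).trace).re + ((Y * HTp).trace).re = 0 := by
    have hsplit : (Y * H).trace = (Y * HT).trace + (Y * HTp).trace := by
      rw [show Y * H = Y * HT + Y * HTp from by rw [hHsum, Matrix.mul_add]]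
      rw [Matrix.trace_add]
    have hh := hTrYH
    rw [hsplit, hYHT] at hh
    have hre := congrArg Complex.re hh
    simp only [Complex.add_re, Complex.zero_re] at hre
    linarith
  -- negativity on the orthogonal complement
  have hNeg : ((Y * HTp).trace).re ≤ 0 := by
    set S := hHTp_psd.sqrt with hS
    have hS2 : S * S = HTp := hHTp_psd.sqrt_mul_self
    have hSherm : S.IsHermitian := hHTp_psd.posSemidef_sqrt.isHermitian
    have hrowP : ∀ c, (1 - P : Matrix (Fin n) (Fin n) ℂ) (⟨0, hn⟩ : Fin n) c = 0 := by
      intro c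
      rw [Matrix.sub_apply, Matrix.one_apply, hP, Matrix.vecMulVec_apply]
      simp only [Pi.star_apply, he]
      rcases eq_or_ne c (⟨0, hn⟩ : Fin n) with rfl | hcne
      · simp
      · simp [hcne, Ne.symm hcne]
    have hrow : ∀ b, HTp (⟨0, hn⟩ : Fin n) b = 0 := by
      intro b
      rw [hHTpX, Matrix.mul_apply]
      refine Finset.sum_eq_zero fun c _ => ?_
      have hz : ((1 - P) * X) (⟨0, hn⟩ : Fin n) c = 0 := by
        rw [Matrix.mul_apply]
        exact Finset.sum_eq_zero fun d _ => by rw [hrowP d, zero_mul]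
      rw [hz, zero_mul]
    have hScol0 : ∀ a, S a (⟨0, hn⟩ : Fin n) = 0 := by
      have hdot : star (fun a => S a (⟨0, hn⟩ : Fin n)) ⬝ᵥ (fun a => S a (⟨0, hn⟩ : Fin n))
          = 0 := by
        have hd : (S * S) (⟨0, hn⟩ : Fin n) (⟨0, hn⟩ : Fin n) = 0 := by
          rw [hS2]; exact hrow _
        rw [← hd, Matrix.mul_apply]
        simp only [dotProduct, Pi.star_apply]
        exact Finset.sum_congr rfl fun a _ => by rw [hSherm.apply (⟨0, hn⟩ : Fin n) a]
      have hv := dotProduct_star_self_eq_zero.mp hdot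
      intro a; exact congr_fun hv a
    have hSrow0 : ∀ b, S (⟨0, hn⟩ : Fin n) b = 0 := fun b => by
      have hb := hSherm.apply (⟨0, hn⟩ : Fin n) b
      rw [← hb, hScol0 b, star_zero]
    have hcyc : (Y * HTp).trace = (S * (Y * S)).trace := by
      rw [← hS2, ← Matrix.mul_assoc, Matrix.trace_mul_comm]
    rw [hcyc, Matrix.trace, Complex.re_sum]
    refine Finset.sum_nonpos fun j _ => ?_
    have hdiag : (S * (Y * S)) j j = star (fun a => S a j) ⬝ᵥ (Y *ᵥ (fun a => S a j)) := by
      rw [Matrix.mul_apply]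
      simp only [dotProduct, Pi.star_apply, Matrix.mulVec, Matrix.mul_apply]
      refine Finset.sum_congr rfl fun a _ => ?_
      rw [hSherm.apply j a]
    rw [Matrix.diag_apply, hdiag]
    rcases eq_or_ne (fun a => S a j) 0 with hz | hnz
    · rw [hz]; simp
    · have horth : star (fun a => S a j) ⬝ᵥ e₁ = 0 := by
        simp only [dotProduct, Pi.star_apply, he]
        have hite : ∀ a : Fin n, star (S a j) * (if a = (⟨0, hn⟩ : Fin n) then (1:ℂ) else 0)
            = if a = (⟨0, hn⟩ : Fin n) then star (S a j) else 0 := fun a => by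
          split_ifs <;> simp
        simp_rw [hite]
        rw [Finset.sum_ite_eq' Finset.univ (⟨0, hn⟩ : Fin n)]
        simp [hSrow0 j]
      exact le_of_lt (hYTperp _ hnz horth)
  have htS : 0 ≤ (HTp.trace).re := PhaseAux.psd_trace_re_nonneg hHTp_psd
  -- Cauchy–Schwarz bound for the certificate
  have habsD : |(((P * Y + Y * P - P * Y * P - P) * HT).trace).re| ≤ (1/5) * frobNorm HT := by
    have hD := PhaseAux.abs_trace_re_mul_le (P * Y + Y * P - P * Y * P - P) HT
    have hDb : frobNorm (P * Y + Y * P - P * Y * P - P) ≤ 1/5 := by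
      have hrw : P * Y + Y * P - P * Y * P - P
          = P * Y + Y * P - P * Y * P - Matrix.vecMulVec e₁ (star e₁) := by rw [← hP]
      rw [hrw]; exact hYT
    exact le_trans hD (mul_le_mul_of_nonneg_right hDb (Real.sqrt_nonneg _))
  -- RIP chain
  have key1 : 2 * (Real.sqrt 2 - 1) * (1 - δ) * opNorm HT ≤ (1 + δ) * ((HTp.trace).re) := by
    have hc2 := h2 HT hHTherm hHT_T
    have heq : (∑ i, ‖star (z i) ⬝ᵥ HT.mulVec (z i)‖) =
        ∑ i, ‖star (z i) ⬝ᵥ HTp.mulVec (z i)‖ := by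
      refine Finset.sum_congr rfl fun i _ => ?_
      have hneg : star (z i) ⬝ᵥ HT *ᵥ (z i) = -(star (z i) ⬝ᵥ HTp *ᵥ (z i)) := by
        have hh := hAH i
        rw [hHsum, Matrix.add_mulVec, dotProduct_add] at hh
        exact eq_neg_of_add_eq_zero_left hh
      rw [show star (z i) ⬝ᵥ HT.mulVec (z i) = star (z i) ⬝ᵥ HT *ᵥ (z i) from rfl, hneg,
        norm_neg]
    have hc1 := h1 HTp hHTp_psd
    calc 2 * (Real.sqrt 2 - 1) * (1 - δ) * opNorm HT
        ≤ (1 / (m:ℝ)) * ∑ i, ‖star (z i) ⬝ᵥ HT.mulVec (z i)‖ := hc2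
      _ = (1 / (m:ℝ)) * ∑ i, ‖star (z i) ⬝ᵥ HTp.mulVec (z i)‖ := by rw [heq]
      _ ≤ (1 + δ) * ((HTp.trace).re) := hc1
  -- Frobenius vs operator norm for tangent matrices
  have hfrob : frobNorm HT ≤ Real.sqrt 2 * opNorm HT := by
    have hcol : ∀ a, (HT *ᵥ e₁) a = HT a (⟨0, hn⟩ : Fin n) := by
      intro a
      simp only [Matrix.mulVec, dotProduct, he]
      have hite : ∀ b : Fin n, HT a b * (if b = (⟨0, hn⟩ : Fin n) then (1:ℂ) else 0)
          = if b = (⟨0, hn⟩ : Fin n) then HT a b else 0 := fun b => by split_ifs <;> simp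
      simp_rw [hite]
      rw [Finset.sum_ite_eq' Finset.univ (⟨0, hn⟩ : Fin n)]
      simp
    have he₁norm : (∑ a, ‖e₁ a‖ ^ 2) = 1 := by
      simp only [he]
      have hite : ∀ a : Fin n, ‖if a = (⟨0, hn⟩ : Fin n) then (1:ℂ) else 0‖ ^ 2
          = if a = (⟨0, hn⟩ : Fin n) then 1 else 0 := fun a => by split_ifs <;> simp
      simp_rw [hite]
      rw [Finset.sum_ite_eq' Finset.univ (⟨0, hn⟩ : Fin n)]
      simp
    have hHT0 : ∀ a b, a ≠ (⟨0, hn⟩ : Fin n) → b ≠ (⟨0, hn⟩ : Fin n) → HT a b = 0 := by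
      intro a b ha hb
      have hea : e₁ a = 0 := by rw [he]; simp [ha]
      have heb : e₁ b = 0 := by rw [he]; simp [hb]
      rw [hHT]
      simp only [Matrix.sub_apply, Matrix.add_apply]
      have h1' : (P * H) a b = 0 := by
        rw [Matrix.mul_apply]
        refine Finset.sum_eq_zero fun c _ => ?_
        rw [hP, Matrix.vecMulVec_apply, hea, zero_mul, zero_mul]
      have h2' : (H * P) a b = 0 := by
        rw [Matrix.mul_apply]
        refine Finset.sum_eq_zero fun c _ => ?_
        rw [hP, Matrix.vecMulVec_apply, Pi.star_apply, heb, star_zero, mul_zero, mul_zero]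
      have h3' : (P * H * P) a b = 0 := by
        rw [Matrix.mul_apply]
        refine Finset.sum_eq_zero fun c _ => ?_
        rw [hP, Matrix.vecMulVec_apply, Pi.star_apply, heb, star_zero, mul_zero, mul_zero]
      rw [h1', h2', h3']
      ring
    have habs_symm : ∀ a b, ‖HT a b‖ = ‖HT b a‖ := by
      intro a b
      rw [← hHTherm.apply a b, Complex.star_def, Complex.norm_conj]
    have hsum2 : (∑ a, ∑ b, ‖HT a b‖ ^ 2)
        ≤ 2 * ∑ a, ‖HT a (⟨0, hn⟩ : Fin n)‖ ^ 2 := by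
      have hsplit : ∀ a : Fin n, (∑ b, ‖HT a b‖ ^ 2) =
          ‖HT a (⟨0, hn⟩ : Fin n)‖ ^ 2
            + ∑ b ∈ Finset.univ.erase (⟨0, hn⟩ : Fin n), ‖HT a b‖ ^ 2 :=
        fun a => (Finset.add_sum_erase _ _ (Finset.mem_univ _)).symm
      simp_rw [hsplit]
      rw [Finset.sum_add_distrib]
      have hsecond : (∑ a, ∑ b ∈ Finset.univ.erase (⟨0, hn⟩ : Fin n),
          ‖HT a b‖ ^ 2)
          = ∑ b ∈ Finset.univ.erase (⟨0, hn⟩ : Fin n),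
              ‖HT (⟨0, hn⟩ : Fin n) b‖ ^ 2 := by
        rw [Finset.sum_eq_single (⟨0, hn⟩ : Fin n)]
        · intro a _ ha
          exact Finset.sum_eq_zero fun b hb => by
            rw [hHT0 a b ha (Finset.ne_of_mem_erase hb)]; simp
        · intro hmem; exact absurd (Finset.mem_univ _) hmem
      rw [hsecond]
      have hle : (∑ b ∈ Finset.univ.erase (⟨0, hn⟩ : Fin n),
            ‖HT (⟨0, hn⟩ : Fin n) b‖ ^ 2)
          ≤ ∑ b, ‖HT b (⟨0, hn⟩ : Fin n)‖ ^ 2 := by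
        calc (∑ b ∈ Finset.univ.erase (⟨0, hn⟩ : Fin n),
              ‖HT (⟨0, hn⟩ : Fin n) b‖ ^ 2)
            = ∑ b ∈ Finset.univ.erase (⟨0, hn⟩ : Fin n),
              ‖HT b (⟨0, hn⟩ : Fin n)‖ ^ 2 :=
              Finset.sum_congr rfl fun b _ => by rw [habs_symm]
          _ ≤ ∑ b, ‖HT b (⟨0, hn⟩ : Fin n)‖ ^ 2 :=
              Finset.sum_le_sum_of_subset_of_nonneg (Finset.subset_univ _)
                (fun _ _ _ => sq_nonneg _)
      linarith
    have hopcol := PhaseAux.opNorm_mulVec HT e₁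
    rw [he₁norm, Real.sqrt_one, mul_one] at hopcol
    have hcolle : Real.sqrt (∑ a, ‖HT a (⟨0, hn⟩ : Fin n)‖ ^ 2) ≤ opNorm HT := by
      refine le_trans (le_of_eq ?_) hopcol
      congr 1
      exact Finset.sum_congr rfl fun a _ => by rw [hcol a]
    calc frobNorm HT = Real.sqrt (∑ a, ∑ b, ‖HT a b‖ ^ 2) := rfl
      _ ≤ Real.sqrt (2 * ∑ a, ‖HT a (⟨0, hn⟩ : Fin n)‖ ^ 2) :=
          Real.sqrt_le_sqrt hsum2
      _ = Real.sqrt 2 * Real.sqrt (∑ a, ‖HT a (⟨0, hn⟩ : Fin n)‖ ^ 2) :=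
          Real.sqrt_mul (by norm_num) _
      _ ≤ Real.sqrt 2 * opNorm HT := mul_le_mul_of_nonneg_left hcolle (Real.sqrt_nonneg 2)
  -- trace bookkeeping
  have hTrHT : HT.trace = (P * HT).trace := by
    rw [hPHT]
    rw [hHT, Matrix.trace_sub, Matrix.trace_add]
    rw [Matrix.trace_mul_comm H P]
    have hphp : (P * H * P).trace = (P * H).trace := by
      rw [Matrix.trace_mul_comm, ← Matrix.mul_assoc, hPP]
    rw [hphp]
    ring
  have hTrH : (H.trace).re = ((P * HT).trace).re + (HTp.trace).re := by
    rw [show H.trace = HT.trace + HTp.trace from by rw [hHsum, Matrix.trace_add]]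
    rw [hTrHT, Complex.add_re]
  have hTrP : P.trace = 1 := by
    rw [hP, Matrix.trace]
    simp only [Matrix.diag_apply, Matrix.vecMulVec_apply, Pi.star_apply]
    calc (∑ a, e₁ a * star (e₁ a)) = ∑ a, star (e₁ a) * e₁ a :=
        Finset.sum_congr rfl fun a _ => mul_comm _ _
      _ = star e₁ ⬝ᵥ e₁ := rfl
      _ = 1 := hee
  -- numeric endgame
  have hopos : (0:ℝ) ≤ opNorm HT := norm_nonneg _
  have hfpos : (0:ℝ) ≤ frobNorm HT := Real.sqrt_nonneg _
  have hs2 : Real.sqrt 2 ^ 2 = 2 := Real.sq_sqrt (by norm_num)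
  have hs0 : 0 ≤ Real.sqrt 2 := Real.sqrt_nonneg 2
  have hsle : Real.sqrt 2 ≤ 3/2 :=
    calc Real.sqrt 2 ≤ Real.sqrt ((3/2)^2) := Real.sqrt_le_sqrt (by norm_num)
      _ = 3/2 := Real.sqrt_sq (by norm_num)
  have hsge : 4/3 ≤ Real.sqrt 2 :=
    calc (4:ℝ)/3 = Real.sqrt ((4/3)^2) := (Real.sqrt_sq (by norm_num)).symm
      _ ≤ Real.sqrt 2 := Real.sqrt_le_sqrt (by norm_num)
  have hs1 : 0 < Real.sqrt 2 - 1 := by linarith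
  have hd1 : 0 < 1 - δ := by linarith
  have hcpos : 0 < 2 * (Real.sqrt 2 - 1) * (1 - δ) :=
    mul_pos (mul_pos (by norm_num) hs1) hd1
  have hfin : 0 < (H.trace).re := by
    rw [hTrH]
    rcases eq_or_lt_of_le htS with h0 | hpos
    · exfalso
      have hHTp0 : HTp = 0 := PhaseAux.psd_trace_eq_zero hHTp_psd h0.symm
      have ho0 : opNorm HT ≤ 0 := by nlinarith [key1, hcpos, hopos, h0]
      have hf0 : frobNorm HT = 0 := le_antisymm (by nlinarith [hfrob, hs0, ho0, hopos]) hfpos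
      have hHT0 : HT = 0 := PhaseAux.frobNorm_eq_zero hf0
      apply hXne
      have hHzero : H = 0 := by rw [hHsum, hHT0, hHTp0, add_zero]
      have hXP : X - P = 0 := by rw [← hH]; exact hHzero
      rw [← hP]
      exact sub_eq_zero.mp hXP
    · have hflt : frobNorm HT < 5 * (HTp.trace).re :=
        PhaseAux.numeric_flt hfpos hopos hpos hδ0 hδ key1 hfrob
      have habs := abs_le.mp habsD
      linarith [hNeg, hzero, habs.1, habs.2]
  have hHtr2 : (H.trace).re = (X.trace).re - 1 := by
    rw [hH, Matrix.trace_sub, hTrP, Complex.sub_re, Complex.one_re]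
  rw [← hP, hTrP, Complex.one_re]
  linarith
end

section
/- For every integer n ≥ 3 and every λ ∈ [0,1]: ∫∫_{x₁ ≥ 0, x₂ ≥ 0, x₁+x₂ ≤ 1} |x₁ − λx₂|·(1 − x₁ − x₂)^{n−3} dx₁ dx₂ = (1/(n(n−1)(n−2)))·(1+λ²)/(1+λ). -/
open MeasureTheory intervalIntegral

lemma int_pow_sub (b c d : ℝ) (m : ℕ) :
    ∫ x in c..d, (b - x) ^ m = ((b - c) ^ (m + 1) - (b - d) ^ (m + 1)) / (m + 1) := by
  rw [intervalIntegral.integral_comp_sub_left (fun x => x ^ m) b, integral_pow]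

lemma lin_pow_int (α b c d : ℝ) (m : ℕ) :
    ∫ x in c..d, (α - x) * (b - x) ^ m
      = (α - b) * (((b - c) ^ (m + 1) - (b - d) ^ (m + 1)) / (m + 1))
        + ((b - c) ^ (m + 2) - (b - d) ^ (m + 2)) / (m + 2) := by
  have h : ∀ x : ℝ, (α - x) * (b - x) ^ m = (α - b) * (b - x) ^ m + (b - x) ^ (m + 1) := by
    intro x; ring
  simp_rw [h]
  rw [intervalIntegral.integral_add
      (((by fun_prop : Continuous fun x : ℝ => (α - b) * (b - x) ^ m)).intervalIntegrable c d)
      (((by fun_prop : Continuous fun x : ℝ => (b - x) ^ (m + 1))).intervalIntegrable c d),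
    intervalIntegral.integral_const_mul, int_pow_sub, int_pow_sub]
  push_cast
  ring

lemma inner_int (m : ℕ) (a b : ℝ) (ha : 0 ≤ a) (hb : 0 ≤ b) :
    ∫ x in (0:ℝ)..b, |x - a| * (b - x) ^ m
      = (a - b) * b ^ (m + 1) / (m + 1) + b ^ (m + 2) / (m + 2)
        + 2 * (max (b - a) 0) ^ (m + 2) / ((m + 1) * (m + 2)) := by
  have hm1 : ((m : ℝ) + 1) ≠ 0 := by positivity
  have hm2 : ((m : ℝ) + 2) ≠ 0 := by positivity
  rcases le_or_gt a b with hab | hab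
  · have hmax : max (b - a) 0 = b - a := max_eq_left (by linarith)
    have hsplit := intervalIntegral.integral_add_adjacent_intervals
      (a := (0:ℝ)) (b := a) (c := b)
      (((by fun_prop : Continuous fun x : ℝ => |x - a| * (b - x) ^ m)).intervalIntegrable (μ := volume) 0 a)
      (((by fun_prop : Continuous fun x : ℝ => |x - a| * (b - x) ^ m)).intervalIntegrable (μ := volume) a b)
    rw [← hsplit]
    have h1 : ∫ x in (0:ℝ)..a, |x - a| * (b - x) ^ m
        = ∫ x in (0:ℝ)..a, (a - x) * (b - x) ^ m := by
      apply intervalIntegral.integral_congr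
      intro x hx
      dsimp only
      rw [Set.uIcc_of_le ha] at hx
      rw [abs_of_nonpos (by linarith [hx.2])]
      ring
    have h2 : ∫ x in a..b, |x - a| * (b - x) ^ m
        = ∫ x in a..b, -((a - x) * (b - x) ^ m) := by
      apply intervalIntegral.integral_congr
      intro x hx
      dsimp only
      rw [Set.uIcc_of_le hab] at hx
      rw [abs_of_nonneg (by linarith [hx.1])]
      ring
    rw [h1, h2, intervalIntegral.integral_neg, lin_pow_int, lin_pow_int, hmax]
    have hbb : b - b = 0 := by ring
    rw [hbb, sub_zero, zero_pow (by omega : m + 1 ≠ 0), zero_pow (by omega : m + 2 ≠ 0)]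
    field_simp
    ring
  · have hmax : max (b - a) 0 = 0 := max_eq_right (by linarith)
    have h1 : ∫ x in (0:ℝ)..b, |x - a| * (b - x) ^ m
        = ∫ x in (0:ℝ)..b, (a - x) * (b - x) ^ m := by
      apply intervalIntegral.integral_congr
      intro x hx
      dsimp only
      rw [Set.uIcc_of_le hb] at hx
      rw [abs_of_nonpos (by linarith [hx.2])]
      ring
    rw [h1, lin_pow_int, hmax]
    have hbb : b - b = 0 := by ring
    rw [hbb, sub_zero, zero_pow (by omega : m + 1 ≠ 0), zero_pow (by omega : m + 2 ≠ 0)]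
    field_simp
    ring

lemma pow_one_sub_int (k : ℕ) : ∫ y in (0:ℝ)..1, (1 - y) ^ k = 1 / (k + 1) := by
  rw [int_pow_sub]
  norm_num

lemma max_int (m : ℕ) (lam : ℝ) (h0 : 0 ≤ lam) (h1 : lam ≤ 1) :
    ∫ y in (0:ℝ)..1, (max (1 - (1 + lam) * y) 0) ^ (m + 2)
      = 1 / ((1 + lam) * (m + 3)) := by
  have hl : (0:ℝ) < 1 + lam := by linarith
  set c : ℝ := 1 / (1 + lam) with hc
  have hc1 : c ≤ 1 := by rw [hc, div_le_one hl]; linarith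
  have hc0 : (0:ℝ) ≤ c := by positivity
  have hcc : (1 + lam) * c = 1 := by rw [hc]; field_simp
  have hcont : Continuous fun y : ℝ => (max (1 - (1 + lam) * y) 0) ^ (m + 2) := by
    apply Continuous.pow
    exact (continuous_const.sub (continuous_const.mul continuous_id)).max continuous_const
  rw [← intervalIntegral.integral_add_adjacent_intervals (a := (0:ℝ)) (b := c) (c := 1)
      (hcont.intervalIntegrable (μ := volume) 0 c)
      (hcont.intervalIntegrable (μ := volume) c 1)]
  have e1 : ∫ y in (0:ℝ)..c, (max (1 - (1 + lam) * y) 0) ^ (m + 2)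
      = ∫ y in (0:ℝ)..c, (1 - (1 + lam) * y) ^ (m + 2) := by
    apply intervalIntegral.integral_congr
    intro y hy
    rw [Set.uIcc_of_le hc0] at hy
    dsimp only
    rw [max_eq_left]
    nlinarith [hy.1, hy.2]
  have e2 : ∫ y in c..(1:ℝ), (max (1 - (1 + lam) * y) 0) ^ (m + 2) = 0 := by
    have e2' : ∫ y in c..(1:ℝ), (max (1 - (1 + lam) * y) 0) ^ (m + 2)
        = ∫ y in c..(1:ℝ), (0:ℝ) := by
      apply intervalIntegral.integral_congr
      intro y hy
      rw [Set.uIcc_of_le hc1] at hy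
      dsimp only
      rw [max_eq_right, zero_pow (by omega : m + 2 ≠ 0)]
      nlinarith [hy.1, hy.2]
    rw [e2', intervalIntegral.integral_zero]
  rw [e1, e2, intervalIntegral.integral_comp_mul_left (fun t => (1 - t) ^ (m + 2))
      (ne_of_gt hl), mul_zero, hcc, int_pow_sub]
  norm_num
  rw [inv_eq_one_div]
  field_simp
  ring

lemma outer_int (m : ℕ) (lam : ℝ) (h0 : 0 ≤ lam) (h1 : lam ≤ 1) :
    ∫ y in (0:ℝ)..1,
      ((lam * y - (1 - y)) * (1 - y) ^ (m + 1) / (m + 1) + (1 - y) ^ (m + 2) / (m + 2)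
        + 2 * (max ((1 - y) - lam * y) 0) ^ (m + 2) / ((m + 1) * (m + 2)))
      = 1 / ((m + 1) * (m + 2) * (m + 3)) * ((1 + lam ^ 2) / (1 + lam)) := by
  have hm1 : ((m : ℝ) + 1) ≠ 0 := by positivity
  have hm2 : ((m : ℝ) + 2) ≠ 0 := by positivity
  have hm3 : ((m : ℝ) + 3) ≠ 0 := by positivity
  have hl : ((1:ℝ) + lam) ≠ 0 := by positivity
  have key : ∀ y : ℝ,
      (lam * y - (1 - y)) * (1 - y) ^ (m + 1) / (m + 1) + (1 - y) ^ (m + 2) / (m + 2)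
        + 2 * (max ((1 - y) - lam * y) 0) ^ (m + 2) / ((m + 1) * (m + 2))
      = (lam / (m + 1)) * (1 - y) ^ (m + 1)
        + (1 / ((m:ℝ) + 2) - (1 + lam) / (m + 1)) * (1 - y) ^ (m + 2)
        + (2 / (((m:ℝ) + 1) * (m + 2))) * (max (1 - (1 + lam) * y) 0) ^ (m + 2) := by
    intro y
    have harg : (1 - y) - lam * y = 1 - (1 + lam) * y := by ring
    rw [harg]
    field_simp
    ring
  simp_rw [key]
  have c1 : Continuous fun y : ℝ => (lam / ((m:ℝ) + 1)) * (1 - y) ^ (m + 1) := by fun_prop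
  have c2 : Continuous fun y : ℝ =>
      (1 / ((m:ℝ) + 2) - (1 + lam) / (m + 1)) * (1 - y) ^ (m + 2) := by fun_prop
  have c3 : Continuous fun y : ℝ =>
      (2 / (((m:ℝ) + 1) * (m + 2))) * (max (1 - (1 + lam) * y) 0) ^ (m + 2) :=
    continuous_const.mul (((continuous_const.sub
      (continuous_const.mul continuous_id)).max continuous_const).pow (m + 2))
  rw [intervalIntegral.integral_add (f := fun y => lam / ((m:ℝ) + 1) * (1 - y) ^ (m + 1)
        + (1 / ((m:ℝ) + 2) - (1 + lam) / (m + 1)) * (1 - y) ^ (m + 2))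
      ((c1.add c2).intervalIntegrable (μ := volume) 0 1)
      (c3.intervalIntegrable (μ := volume) 0 1),
    intervalIntegral.integral_add (c1.intervalIntegrable (μ := volume) 0 1)
      (c2.intervalIntegrable (μ := volume) 0 1),
    intervalIntegral.integral_const_mul, intervalIntegral.integral_const_mul,
    intervalIntegral.integral_const_mul, pow_one_sub_int, pow_one_sub_int,
    max_int m lam h0 h1]
  push_cast
  field_simp
  ring

lemma main_int (m : ℕ) (lam : ℝ) (h0 : 0 ≤ lam) (h1 : lam ≤ 1) :
    ∫ p in {p : ℝ × ℝ | 0 ≤ p.1 ∧ 0 ≤ p.2 ∧ p.1 + p.2 ≤ 1},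
        |p.1 - lam * p.2| * (1 - p.1 - p.2) ^ m
      = 1 / (((m:ℝ) + 1) * ((m:ℝ) + 2) * ((m:ℝ) + 3)) * ((1 + lam ^ 2) / (1 + lam)) := by
  set S : Set (ℝ × ℝ) := {p : ℝ × ℝ | 0 ≤ p.1 ∧ 0 ≤ p.2 ∧ p.1 + p.2 ≤ 1} with hS
  set f : ℝ × ℝ → ℝ := fun p => |p.1 - lam * p.2| * (1 - p.1 - p.2) ^ m with hf
  have hfc : Continuous f := by
    apply Continuous.mul
    · exact (continuous_fst.sub (continuous_const.mul continuous_snd)).abs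
    · exact ((continuous_const.sub continuous_fst).sub continuous_snd).pow m
  have hclosed : IsClosed S := by
    have : S = {p : ℝ × ℝ | 0 ≤ p.1} ∩ ({p : ℝ × ℝ | 0 ≤ p.2} ∩ {p : ℝ × ℝ | p.1 + p.2 ≤ 1}) := by
      ext p; simp [hS, Set.mem_setOf_eq, and_assoc]
    rw [this]
    exact (isClosed_le continuous_const continuous_fst).inter
      ((isClosed_le continuous_const continuous_snd).inter
        (isClosed_le (continuous_fst.add continuous_snd) continuous_const))
  have hSm : MeasurableSet S := hclosed.measurableSet
  have hcomp : IsCompact S := by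
    apply IsCompact.of_isClosed_subset (isCompact_Icc (a := ((0:ℝ), (0:ℝ))) (b := (1, 1)))
      hclosed
    intro p hp
    obtain ⟨hp1, hp2, hp3⟩ := hp
    simp only [Set.mem_Icc, Prod.le_def]
    refine ⟨⟨hp1, hp2⟩, ⟨by linarith, by linarith⟩⟩
  have hint : IntegrableOn f S := hfc.continuousOn.integrableOn_compact hcomp
  have hInd : Integrable (S.indicator f) := hint.integrable_indicator hSm
  have step1 : ∫ p in S, f p = ∫ y, ∫ x, S.indicator f (x, y) := by
    rw [← MeasureTheory.integral_indicator hSm]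
    rw [MeasureTheory.Measure.volume_eq_prod] at hInd ⊢
    exact MeasureTheory.integral_prod_symm _ hInd
  have step2 : (fun y => ∫ x, S.indicator f (x, y))
      = (Set.Icc (0:ℝ) 1).indicator
          (fun y => ∫ x in (0:ℝ)..(1 - y), |x - lam * y| * ((1 - y) - x) ^ m) := by
    funext y
    by_cases hy : y ∈ Set.Icc (0:ℝ) 1
    · obtain ⟨hy0, hy1⟩ := hy
      rw [Set.indicator_of_mem (Set.mem_Icc.mpr ⟨hy0, hy1⟩)]
      have hx : ∀ x : ℝ, S.indicator f (x, y)
          = (Set.Icc (0:ℝ) (1 - y)).indicator (fun x => f (x, y)) x := by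
        intro x
        rw [Set.indicator_apply, Set.indicator_apply]
        have hiff : ((x, y) ∈ S) ↔ x ∈ Set.Icc (0:ℝ) (1 - y) := by
          simp only [hS, Set.mem_setOf_eq, Set.mem_Icc]
          constructor
          · rintro ⟨a, b, c⟩; exact ⟨a, by linarith⟩
          · rintro ⟨a, b⟩; exact ⟨a, hy0, by linarith⟩
        rw [if_congr hiff rfl rfl]
      simp_rw [hx]
      rw [MeasureTheory.integral_indicator measurableSet_Icc,
        MeasureTheory.integral_Icc_eq_integral_Ioc,
        ← intervalIntegral.integral_of_le (by linarith : (0:ℝ) ≤ 1 - y)]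
      apply intervalIntegral.integral_congr
      intro x hx'
      simp only [hf]
      ring_nf
    · rw [Set.indicator_of_notMem hy]
      have hx : ∀ x : ℝ, S.indicator f (x, y) = 0 := by
        intro x
        apply Set.indicator_of_notMem
        simp only [hS, Set.mem_setOf_eq]
        rintro ⟨a, b, c⟩
        rw [Set.mem_Icc] at hy
        push_neg at hy
        rcases lt_or_ge y 0 with h | h
        · linarith
        · linarith [hy h]
      simp_rw [hx]
      exact integral_zero ℝ ℝ
  rw [step1, step2, MeasureTheory.integral_indicator measurableSet_Icc,
    MeasureTheory.integral_Icc_eq_integral_Ioc,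
    ← intervalIntegral.integral_of_le (zero_le_one (α := ℝ))]
  have step3 : ∫ y in (0:ℝ)..1,
      (∫ x in (0:ℝ)..(1 - y), |x - lam * y| * ((1 - y) - x) ^ m)
      = ∫ y in (0:ℝ)..1,
        ((lam * y - (1 - y)) * (1 - y) ^ (m + 1) / (m + 1) + (1 - y) ^ (m + 2) / (m + 2)
          + 2 * (max ((1 - y) - lam * y) 0) ^ (m + 2) / ((m + 1) * (m + 2))) := by
    apply intervalIntegral.integral_congr
    intro y hy
    rw [Set.uIcc_of_le zero_le_one] at hy
    dsimp only
    exact inner_int m (lam * y) (1 - y) (mul_nonneg h0 hy.1) (by linarith [hy.2])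
  rw [step3, outer_int m lam h0 h1]

/-- For every `n ≥ 3` and `λ ∈ [0,1]`,
`∫∫_{x₁,x₂ ≥ 0, x₁+x₂ ≤ 1} |x₁ − λx₂|·(1−x₁−x₂)^{n−3} dx₁dx₂
  = (1/(n(n−1)(n−2)))·(1+λ²)/(1+λ)`. -/
theorem simplex_integral_abs_diff (n : ℕ) (hn : 3 ≤ n) (lam : ℝ)
    (hlam : lam ∈ Set.Icc (0 : ℝ) 1) :
    ∫ p in {p : ℝ × ℝ | 0 ≤ p.1 ∧ 0 ≤ p.2 ∧ p.1 + p.2 ≤ 1},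
        |p.1 - lam * p.2| * (1 - p.1 - p.2) ^ (n - 3) =
      1 / ((n : ℝ) * ((n : ℝ) - 1) * ((n : ℝ) - 2)) * ((1 + lam ^ 2) / (1 + lam)) := by
  obtain ⟨h0, h1⟩ := hlam
  have hnm : (n : ℝ) = ((n - 3 : ℕ) : ℝ) + 3 := by
    have : n = (n - 3) + 3 := by omega
    rw [this]; push_cast; ring
  rw [main_int (n - 3) lam h0 h1, hnm]
  ring
end

section
/- Define t : ℂⁿ × ℂⁿ → ℂⁿ by t(x,y) = x − ⟨y,x⟩·y, where ⟨·,·⟩ is the standard Hermitian inner product. Then for all x₁, y₁, x₂, y₂ in the closed unit ball of ℂⁿ: ‖t(x₁,y₁) − t(x₂,y₂)‖₂ ≤ 2·(‖x₁ − x₂‖₂² + ‖y₁ − y₂‖₂²)^{1/2}. That is, t is 2-Lipschitz on the product of closed unit balls with respect to the Euclidean norm on ℂⁿ × ℂⁿ. -/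
open scoped InnerProductSpace
open Set

/-- Pure real arithmetic core of the key inequality. -/
lemma gs_real_core (p T V γ α β : ℝ) (hp : 0 ≤ p) (hT : 0 ≤ T) (hV : 0 ≤ V)
    (hγ : 0 ≤ γ) (hα : 0 ≤ α) (hβ : 0 ≤ β) (hγ1 : γ ≤ 1)
    (hTle : T ≤ V * γ)
    (hPsq : p ^ 2 = V ^ 2 - 2 * T ^ 2 + T ^ 2 * γ ^ 2)
    (h1 : V ^ 2 ≤ p * α + (T + γ * V) * β) :
    V ≤ 2 * Real.sqrt (α ^ 2 + β ^ 2) := by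
  set S : ℝ := α ^ 2 + β ^ 2 with hSdef
  have hS0 : 0 ≤ S := by positivity
  have hγsq : γ ^ 2 ≤ 1 := by nlinarith
  have hA : 0 ≤ (1 - γ ^ 2) * (V ^ 2 + T ^ 2) :=
    mul_nonneg (by linarith) (by positivity)
  have hγT : γ * T ≤ V := by nlinarith
  have hB : 0 ≤ V * (V - γ * T) := mul_nonneg hV (by linarith)
  have hquad : p ^ 2 + (T + γ * V) ^ 2 ≤ 4 * V ^ 2 := by nlinarith [hA, hB]
  have hcs : (p * α + (T + γ * V) * β) ^ 2 ≤ (p ^ 2 + (T + γ * V) ^ 2) * S := by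
    rw [hSdef]; nlinarith [sq_nonneg (p * β - (T + γ * V) * α)]
  have hV4 : (V ^ 2) ^ 2 ≤ 4 * V ^ 2 * S := by
    calc (V ^ 2) ^ 2 ≤ (p * α + (T + γ * V) * β) ^ 2 :=
          pow_le_pow_left₀ (sq_nonneg V) h1 2
      _ ≤ (p ^ 2 + (T + γ * V) ^ 2) * S := hcs
      _ ≤ 4 * V ^ 2 * S := mul_le_mul_of_nonneg_right hquad hS0
  have hfin : V ^ 2 ≤ 4 * S := by
    rcases eq_or_lt_of_le hV with h | h
    · rw [← h]; nlinarith
    · nlinarith [hV4]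
  have hsq : (2 * Real.sqrt S) ^ 2 = 4 * S := by
    rw [mul_pow, Real.sq_sqrt hS0]; ring
  calc V = Real.sqrt (V ^ 2) := (Real.sqrt_sq hV).symm
    _ ≤ Real.sqrt ((2 * Real.sqrt S) ^ 2) := by
        apply Real.sqrt_le_sqrt; rw [hsq]; exact hfin
    _ = 2 * Real.sqrt S := Real.sqrt_sq (by positivity)

/-- Key pointwise bound: the derivative of the Gram–Schmidt map at a point of the
product of unit balls has norm at most `2 * sqrt (‖a‖² + ‖b‖²)` in direction `(a, b)`. -/
lemma gs_key_ineq {n : ℕ} (x y a b : EuclideanSpace ℂ (Fin n))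
    (hx : ‖x‖ ≤ 1) (hy : ‖y‖ ≤ 1) :
    ‖a - ((inner ℂ y a : ℂ) + (inner ℂ b x : ℂ)) • y - (inner ℂ y x : ℂ) • b‖
      ≤ 2 * Real.sqrt (‖a‖ ^ 2 + ‖b‖ ^ 2) := by
  set v : EuclideanSpace ℂ (Fin n) :=
    a - ((inner ℂ y a : ℂ) + (inner ℂ b x : ℂ)) • y - (inner ℂ y x : ℂ) • b with hvdef
  set P : EuclideanSpace ℂ (Fin n) := v - (inner ℂ y v : ℂ) • y with hPdef
  set T : ℝ := ‖(inner ℂ v y : ℂ)‖ with hTdef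
  set V : ℝ := ‖v‖
  set γ : ℝ := ‖y‖
  set α : ℝ := ‖a‖
  set β : ℝ := ‖b‖
  have expand : (inner ℂ v v : ℂ) = (inner ℂ v a : ℂ)
        - ((inner ℂ y a : ℂ) + (inner ℂ b x : ℂ)) * (inner ℂ v y : ℂ)
        - (inner ℂ y x : ℂ) * (inner ℂ v b : ℂ) := by
    conv_lhs => rw [hvdef]
    rw [inner_sub_right, inner_sub_right, inner_smul_right, inner_smul_right]
  have hPa : (inner ℂ P a : ℂ)
      = (inner ℂ v a : ℂ) - (inner ℂ v y : ℂ) * (inner ℂ y a : ℂ) := by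
    rw [hPdef, inner_sub_left, inner_smul_left, inner_conj_symm]
  have hid : (inner ℂ v v : ℂ)
      = (inner ℂ P a : ℂ) - (inner ℂ b x : ℂ) * (inner ℂ v y : ℂ)
        - (inner ℂ y x : ℂ) * (inner ℂ v b : ℂ) := by
    rw [expand, hPa]; ring
  -- step 1 : V^2 ≤ ‖P‖ * α + (T + γ * V) * β
  have hVsq : V ^ 2 = ‖(inner ℂ v v : ℂ)‖ := by
    rw [inner_self_eq_norm_sq_to_K (𝕜 := ℂ) v, norm_pow, RCLike.norm_ofReal, abs_norm]
  have hT0 : 0 ≤ T := norm_nonneg _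
  have hV0 : 0 ≤ V := norm_nonneg _
  have hγ0 : 0 ≤ γ := norm_nonneg _
  have hα0 : 0 ≤ α := norm_nonneg _
  have hβ0 : 0 ≤ β := norm_nonneg _
  have hP0 : 0 ≤ ‖P‖ := norm_nonneg _
  have h1 : V ^ 2 ≤ ‖P‖ * α + (T + γ * V) * β := by
    rw [hVsq, hid]
    have hbx : ‖(inner ℂ b x : ℂ)‖ ≤ β := by
      calc ‖(inner ℂ b x : ℂ)‖ ≤ β * ‖x‖ := norm_inner_le_norm b x
        _ ≤ β * 1 := mul_le_mul_of_nonneg_left hx hβ0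
        _ = β := mul_one β
    have hyx : ‖(inner ℂ y x : ℂ)‖ ≤ γ := by
      calc ‖(inner ℂ y x : ℂ)‖ ≤ γ * ‖x‖ := norm_inner_le_norm y x
        _ ≤ γ * 1 := mul_le_mul_of_nonneg_left hx hγ0
        _ = γ := mul_one γ
    have hvb : ‖(inner ℂ v b : ℂ)‖ ≤ V * β := norm_inner_le_norm v b
    have hPaN : ‖(inner ℂ P a : ℂ)‖ ≤ ‖P‖ * α := norm_inner_le_norm P a
    calc ‖(inner ℂ P a : ℂ) - (inner ℂ b x : ℂ) * (inner ℂ v y : ℂ)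
          - (inner ℂ y x : ℂ) * (inner ℂ v b : ℂ)‖
        ≤ ‖(inner ℂ P a : ℂ) - (inner ℂ b x : ℂ) * (inner ℂ v y : ℂ)‖
            + ‖(inner ℂ y x : ℂ) * (inner ℂ v b : ℂ)‖ := norm_sub_le _ _
      _ ≤ (‖(inner ℂ P a : ℂ)‖ + ‖(inner ℂ b x : ℂ) * (inner ℂ v y : ℂ)‖)
            + ‖(inner ℂ y x : ℂ) * (inner ℂ v b : ℂ)‖ :=
          add_le_add_left (norm_sub_le _ _) _
      _ = ‖(inner ℂ P a : ℂ)‖ + ‖(inner ℂ b x : ℂ)‖ * T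
            + ‖(inner ℂ y x : ℂ)‖ * ‖(inner ℂ v b : ℂ)‖ := by
          rw [norm_mul, norm_mul, hTdef]
      _ ≤ ‖P‖ * α + β * T + γ * (V * β) := by
          refine add_le_add (add_le_add hPaN ?_) ?_
          · exact mul_le_mul_of_nonneg_right hbx hT0
          · exact mul_le_mul hyx hvb (norm_nonneg _) hγ0
      _ = ‖P‖ * α + (T + γ * V) * β := by ring
  -- step 2 : ‖P‖ ^ 2 = V ^ 2 - 2 * T ^ 2 + T ^ 2 * γ ^ 2
  have hyv : (inner ℂ y v : ℂ) * (inner ℂ v y : ℂ) = ((T : ℝ) : ℂ) ^ 2 := by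
    rw [← inner_conj_symm y v, Complex.conj_mul', hTdef]
  have hPsq : ‖P‖ ^ 2 = V ^ 2 - 2 * T ^ 2 + T ^ 2 * γ ^ 2 := by
    have h := @norm_sub_sq ℂ _ _ _ _ v ((inner ℂ y v : ℂ) • y)
    have hre : RCLike.re (inner ℂ v ((inner ℂ y v : ℂ) • y) : ℂ) = T ^ 2 := by
      rw [inner_smul_right, hyv, ← Complex.ofReal_pow]
      exact RCLike.ofReal_re _
    have hns : ‖(inner ℂ y v : ℂ) • y‖ ^ 2 = T ^ 2 * γ ^ 2 := by
      rw [norm_smul]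
      have hn : ‖(inner ℂ y v : ℂ)‖ = T := by
        rw [norm_inner_symm, hTdef]
      rw [hn]; ring
    rw [hPdef, h, hre, hns]
  -- conclude via the real arithmetic core
  have hT_le : T ≤ V * γ := norm_inner_le_norm v y
  exact gs_real_core ‖P‖ T V γ α β (norm_nonneg _) hT0 hV0 hγ0 hα0 hβ0 hy hT_le hPsq h1

lemma norm_convex_combo {F : Type*} [NormedAddCommGroup F] [NormedSpace ℝ F]
    (u w : F) (hu : ‖u‖ ≤ 1) (hw : ‖w‖ ≤ 1) {τ : ℝ} (h0 : 0 ≤ τ) (h1 : τ ≤ 1) :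
    ‖u + τ • (w - u)‖ ≤ 1 := by
  have hrw : u + τ • (w - u) = (1 - τ) • u + τ • w := by
    rw [smul_sub, sub_smul, one_smul]; abel
  rw [hrw]
  calc ‖(1 - τ) • u + τ • w‖ ≤ ‖(1 - τ) • u‖ + ‖τ • w‖ := norm_add_le _ _
    _ = (1 - τ) * ‖u‖ + τ * ‖w‖ := by
        rw [norm_smul, norm_smul, Real.norm_of_nonneg (by linarith),
          Real.norm_of_nonneg h0]
    _ ≤ (1 - τ) * 1 + τ * 1 := by
        have := norm_nonneg u; have := norm_nonneg w
        apply add_le_add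
        · exact mul_le_mul_of_nonneg_left hu (by linarith)
        · exact mul_le_mul_of_nonneg_left hw h0
    _ = 1 := by ring

/-- The Gram–Schmidt map `t(x,y) = x − ⟨y,x⟩y` is 2-Lipschitz on the
product of closed unit balls of `ℂⁿ`. -/
theorem gram_schmidt_map_two_lipschitz (n : ℕ)
    (t : EuclideanSpace ℂ (Fin n) → EuclideanSpace ℂ (Fin n) → EuclideanSpace ℂ (Fin n))
    (ht : t = fun x y => x - (inner ℂ y x : ℂ) • y)
    (x₁ y₁ x₂ y₂ : EuclideanSpace ℂ (Fin n))
    (hx₁ : ‖x₁‖ ≤ 1) (hy₁ : ‖y₁‖ ≤ 1) (hx₂ : ‖x₂‖ ≤ 1) (hy₂ : ‖y₂‖ ≤ 1) :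
    ‖t x₁ y₁ - t x₂ y₂‖ ≤ 2 * Real.sqrt (‖x₁ - x₂‖ ^ 2 + ‖y₁ - y₂‖ ^ 2) := by
  subst ht
  set a : EuclideanSpace ℂ (Fin n) := x₁ - x₂ with ha
  set b : EuclideanSpace ℂ (Fin n) := y₁ - y₂ with hb
  set u : ℝ → EuclideanSpace ℂ (Fin n) := fun τ => x₂ + τ • a with hu
  set w : ℝ → EuclideanSpace ℂ (Fin n) := fun τ => y₂ + τ • b with hw
  set g : ℝ → EuclideanSpace ℂ (Fin n) :=
    fun τ => u τ - (inner ℂ (w τ) (u τ) : ℂ) • w τ with hg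
  set D : ℝ → EuclideanSpace ℂ (Fin n) := fun τ =>
    a - ((inner ℂ (w τ) a : ℂ) + (inner ℂ b (u τ) : ℂ)) • w τ
      - (inner ℂ (w τ) (u τ) : ℂ) • b with hD
  have hu' : ∀ τ : ℝ, HasDerivAt u a τ := by
    intro τ
    have h := ((hasDerivAt_id τ).smul_const a).const_add x₂
    simpa [hu] using h
  have hw' : ∀ τ : ℝ, HasDerivAt w b τ := by
    intro τ
    have h := ((hasDerivAt_id τ).smul_const b).const_add y₂
    simpa [hw] using h
  have hgderiv : ∀ τ : ℝ, HasDerivAt g (D τ) τ := by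
    intro τ
    have hinner : HasDerivAt (fun τ => (inner ℂ (w τ) (u τ) : ℂ))
        ((inner ℂ (w τ) a : ℂ) + (inner ℂ b (u τ) : ℂ)) τ :=
      HasDerivAt.inner ℂ (hw' τ) (hu' τ)
    have hsmul : HasDerivAt (fun τ => (inner ℂ (w τ) (u τ) : ℂ) • w τ)
        ((inner ℂ (w τ) (u τ) : ℂ) • b
          + ((inner ℂ (w τ) a : ℂ) + (inner ℂ b (u τ) : ℂ)) • w τ) τ :=
      hinner.smul (hw' τ)
    have hfinal := (hu' τ).sub hsmul
    refine hfinal.congr_deriv ?_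
    simp only [hD]
    abel
  have hnormu : ∀ τ ∈ Icc (0 : ℝ) 1, ‖u τ‖ ≤ 1 := by
    intro τ hτ
    exact norm_convex_combo x₂ x₁ hx₂ hx₁ hτ.1 hτ.2
  have hnormw : ∀ τ ∈ Icc (0 : ℝ) 1, ‖w τ‖ ≤ 1 := by
    intro τ hτ
    exact norm_convex_combo y₂ y₁ hy₂ hy₁ hτ.1 hτ.2
  have hbound : ∀ τ ∈ Ico (0 : ℝ) 1,
      ‖D τ‖ ≤ 2 * Real.sqrt (‖a‖ ^ 2 + ‖b‖ ^ 2) := by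
    intro τ hτ
    have hτ' : τ ∈ Icc (0 : ℝ) 1 := ⟨hτ.1, le_of_lt hτ.2⟩
    exact gs_key_ineq (u τ) (w τ) a b (hnormu τ hτ') (hnormw τ hτ')
  have hmvt := norm_image_sub_le_of_norm_deriv_le_segment_01'
    (f := g) (f' := D) (C := 2 * Real.sqrt (‖a‖ ^ 2 + ‖b‖ ^ 2))
    (fun τ _ => (hgderiv τ).hasDerivWithinAt) hbound
  have hg1 : g 1 = x₁ - (inner ℂ y₁ x₁ : ℂ) • y₁ := by
    have e1 : u 1 = x₁ := by
      show x₂ + (1 : ℝ) • a = x₁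
      rw [one_smul, ha]; abel
    have e2 : w 1 = y₁ := by
      show y₂ + (1 : ℝ) • b = y₁
      rw [one_smul, hb]; abel
    rw [hg]; simp only [e1, e2]
  have hg0 : g 0 = x₂ - (inner ℂ y₂ x₂ : ℂ) • y₂ := by
    have e1 : u 0 = x₂ := by
      show x₂ + (0 : ℝ) • a = x₂
      rw [zero_smul, add_zero]
    have e2 : w 0 = y₂ := by
      show y₂ + (0 : ℝ) • b = y₂
      rw [zero_smul, add_zero]
    rw [hg]; simp only [e1, e2]
  rw [hg1, hg0] at hmvt
  simpa using hmvt
end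

section
/- Fix constants c₁ ≥ 1, 0 < c₂ ≤ 1, and λ ∈ [0,1]. Define ṽ₁(x) = x/max(‖x‖₂, √(n/c₁)), ṽ₂(x) = x/max(‖x‖₂, √c₂), t(x,y) = x − ⟨y,x⟩·y, and F̃ : ℂⁿ × ℂⁿ → ℝ by F̃(ζ, z) = Σ_{i=1}^n | |ṽ₁(z)_i|² − λ·|ṽ₂(t(ṽ₁(ζ), ṽ₁(z)))_i|² |. Then F̃ is Lipschitz with constant 20·√(c₁/c₂)/√n with respect to the Euclidean norm on ℂⁿ × ℂⁿ: |F̃(ζ₁,z₁) − F̃(ζ₂,z₂)| ≤ (20·√(c₁/c₂)/√n)·(‖ζ₁−ζ₂‖₂² + ‖z₁−z₂‖₂²)^{1/2} for all ζ₁,ζ₂,z₁,z₂ ∈ ℂⁿ. -/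
open Finset

set_option maxHeartbeats 1000000

/-- The clamped normalization has norm at most 1. -/
lemma clamp_norm_le {n : ℕ} (m : ℝ) (hm : 0 < m) (x : EuclideanSpace ℂ (Fin n)) :
    ‖(max ‖x‖ m)⁻¹ • x‖ ≤ 1 := by
  have h1 : (0:ℝ) < max ‖x‖ m := lt_max_of_lt_right hm
  rw [norm_smul, norm_inv, Real.norm_eq_abs, abs_of_pos h1]
  calc (max ‖x‖ m)⁻¹ * ‖x‖ ≤ (max ‖x‖ m)⁻¹ * max ‖x‖ m := by
        gcongr
        exact le_max_left _ _
    _ = 1 := inv_mul_cancel₀ (ne_of_gt h1)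

/-- The clamped normalization is `m⁻¹`-Lipschitz. -/
lemma clamp_lip {n : ℕ} (m : ℝ) (hm : 0 < m) (x y : EuclideanSpace ℂ (Fin n)) :
    ‖(max ‖x‖ m)⁻¹ • x - (max ‖y‖ m)⁻¹ • y‖ ≤ m⁻¹ * ‖x - y‖ := by
  set a := ‖x‖ with ha
  set b := ‖y‖ with hb
  set s := max a m with hsdef
  set t := max b m with htdef
  have ha0 : 0 ≤ a := norm_nonneg _
  have hb0 : 0 ≤ b := norm_nonneg _
  have hs0 : 0 < s := lt_max_of_lt_right hm
  have ht0 : 0 < t := lt_max_of_lt_right hm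
  have hst0 : 0 < s * t := mul_pos hs0 ht0
  have hrw : s⁻¹ • x - t⁻¹ • y = (s * t)⁻¹ • (t • x - s • y) := by
    rw [smul_sub, smul_smul, smul_smul, mul_inv]
    congr 1
    · congr 1
      field_simp
    · congr 1
      field_simp
  rw [hrw, norm_smul, norm_inv, Real.norm_eq_abs, abs_of_pos hst0]
  set r : ℝ := (inner ℝ x y : ℝ) with hrdef
  have hr : |r| ≤ a * b := abs_real_inner_le_norm x y
  have hr1 : r ≤ a * b := (abs_le.mp hr).2
  set p := min a m with hpdef
  set q := min b m with hqdef
  have hp : s * p = a * m := by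
    rcases le_total a m with h | h
    · rw [hsdef, hpdef, max_eq_right h, min_eq_left h, mul_comm]
    · rw [hsdef, hpdef, max_eq_left h, min_eq_right h]
  have hq : t * q = b * m := by
    rcases le_total b m with h | h
    · rw [htdef, hqdef, max_eq_right h, min_eq_left h, mul_comm]
    · rw [htdef, hqdef, max_eq_left h, min_eq_right h]
  have hd : (p - q)^2 ≤ (a - b)^2 := by
    rcases le_total a m with h1 | h1 <;> rcases le_total b m with h2 | h2 <;>
      simp only [hpdef, hqdef, min_eq_left, min_eq_right, h1, h2] <;> nlinarith
  have e1 : ‖t • x - s • y‖^2 = t^2*a^2 - 2*(s*t)*r + s^2*b^2 := by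
    rw [norm_sub_sq_real, real_inner_smul_left, real_inner_smul_right, norm_smul, norm_smul,
      Real.norm_eq_abs, Real.norm_eq_abs, abs_of_pos ht0, abs_of_pos hs0]
    rw [← ha, ← hb, ← hrdef]
    ring
  have e2 : ‖x - y‖^2 = a^2 - 2*r + b^2 := by
    rw [norm_sub_sq_real, ← ha, ← hb, ← hrdef]
  have hT1 : (0:ℝ) ≤ s^2*t^2*((a-b)^2 - (p-q)^2) :=
    mul_nonneg (by positivity) (sub_nonneg.2 hd)
  have hmst : m^2 ≤ s * t := by
    have := le_max_right a m
    have := le_max_right b m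
    nlinarith
  have hT2 : (0:ℝ) ≤ 2*(s*t)*((s*t - m^2)*(a*b - r)) :=
    mul_nonneg (by positivity) (mul_nonneg (sub_nonneg.2 hmst) (sub_nonneg.2 hr1))
  have hpp : (s*p)^2 = (a*m)^2 := by rw [hp]
  have hqq : (t*q)^2 = (b*m)^2 := by rw [hq]
  have hpq : (s*p)*(t*q) = (a*m)*(b*m) := by rw [hp, hq]
  have iden : (s*t)^2*(a^2-2*r+b^2) - m^2*(t^2*a^2-2*(s*t)*r+s^2*b^2) =
      s^2*t^2*((a-b)^2-(p-q)^2) + 2*(s*t)*((s*t-m^2)*(a*b-r))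
      + t^2*((s*p)^2-(a*m)^2) + s^2*((t*q)^2-(b*m)^2)
      - 2*(s*t)*((s*p)*(t*q)-(a*m)*(b*m)) := by ring
  rw [hpp, hqq, hpq, sub_self, sub_self, sub_self, mul_zero, mul_zero, mul_zero,
    add_zero, add_zero, sub_zero] at iden
  have key2 : (m * ‖t • x - s • y‖)^2 ≤ ((s*t) * ‖x - y‖)^2 := by
    rw [mul_pow, mul_pow, e1, e2]
    linarith [hT1, hT2, iden]
  have key : m * ‖t • x - s • y‖ ≤ (s*t) * ‖x - y‖ := by
    have h := Real.sqrt_le_sqrt key2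
    rwa [Real.sqrt_sq (by positivity), Real.sqrt_sq (by positivity)] at h
  calc (s*t)⁻¹ * ‖t • x - s • y‖
      = (s*t)⁻¹ * m⁻¹ * (m * ‖t • x - s • y‖) := by field_simp
    _ ≤ (s*t)⁻¹ * m⁻¹ * ((s*t) * ‖x - y‖) := by gcongr
    _ = m⁻¹ * ‖x - y‖ := by field_simp


/-- `ṽ₁(x) = x / max(‖x‖₂, √(n/c₁))`. -/
noncomputable def v1 {n : ℕ} (c₁ : ℝ) (x : EuclideanSpace ℂ (Fin n)) :
    EuclideanSpace ℂ (Fin n) :=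
  (max ‖x‖ (Real.sqrt ((n : ℝ) / c₁)))⁻¹ • x

/-- `ṽ₂(x) = x / max(‖x‖₂, √c₂)`. -/
noncomputable def v2 {n : ℕ} (c₂ : ℝ) (x : EuclideanSpace ℂ (Fin n)) :
    EuclideanSpace ℂ (Fin n) :=
  (max ‖x‖ (Real.sqrt c₂))⁻¹ • x

/-- `t(x,y) = x − ⟨y,x⟩·y`. -/
noncomputable def tGS {n : ℕ} (x y : EuclideanSpace ℂ (Fin n)) : EuclideanSpace ℂ (Fin n) :=
  x - (inner ℂ y x : ℂ) • y

/-- `F̃(ζ,z) = Σᵢ ||ṽ₁(z)ᵢ|² − λ|ṽ₂(t(ṽ₁(ζ),ṽ₁(z)))ᵢ|²|`. -/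
noncomputable def Ftil {n : ℕ} (c₁ c₂ lam : ℝ) (ζ z : EuclideanSpace ℂ (Fin n)) : ℝ :=
  ∑ i, |‖v1 c₁ z i‖ ^ 2 -
    lam * ‖v2 c₂ (tGS (v1 c₁ ζ) (v1 c₁ z)) i‖ ^ 2|

lemma tGS_lip {n : ℕ} (x x' y y' : EuclideanSpace ℂ (Fin n))
    (hx : ‖x‖ ≤ 1) (hx' : ‖x'‖ ≤ 1) (hy : ‖y‖ ≤ 1) (hy' : ‖y'‖ ≤ 1) :
    ‖tGS x y - tGS x' y'‖ ≤ 2 * ‖x - x'‖ + 2 * ‖y - y'‖ := by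
  have hrw : tGS x y - tGS x' y' =
      (x - x') - ((inner ℂ y (x - x') : ℂ) • y + (inner ℂ (y - y') x' : ℂ) • y
        + (inner ℂ y' x' : ℂ) • (y - y')) := by
    simp only [tGS, inner_sub_left, inner_sub_right]
    module
  have b1 : ‖(inner ℂ y (x - x') : ℂ) • y‖ ≤ ‖x - x'‖ := by
    rw [norm_smul]
    have h := norm_inner_le_norm (𝕜 := ℂ) y (x - x')
    nlinarith [norm_nonneg (x - x'), norm_nonneg y, norm_nonneg (inner ℂ y (x-x') : ℂ)]
  have b2 : ‖(inner ℂ (y - y') x' : ℂ) • y‖ ≤ ‖y - y'‖ := by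
    rw [norm_smul]
    have h := norm_inner_le_norm (𝕜 := ℂ) (y - y') x'
    nlinarith [norm_nonneg (y - y'), norm_nonneg y, norm_nonneg (inner ℂ (y-y') x' : ℂ)]
  have b3 : ‖(inner ℂ y' x' : ℂ) • (y - y')‖ ≤ ‖y - y'‖ := by
    rw [norm_smul]
    have h := norm_inner_le_norm (𝕜 := ℂ) y' x'
    have hle : ‖(inner ℂ y' x' : ℂ)‖ ≤ 1 :=
      h.trans (mul_le_one₀ hy' (norm_nonneg _) hx')
    exact mul_le_of_le_one_left (norm_nonneg _) hle
  calc ‖tGS x y - tGS x' y'‖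
      ≤ ‖x - x'‖ + ‖(inner ℂ y (x - x') : ℂ) • y + (inner ℂ (y - y') x' : ℂ) • y
        + (inner ℂ y' x' : ℂ) • (y - y')‖ := by rw [hrw]; exact norm_sub_le _ _
    _ ≤ ‖x - x'‖ + (‖(inner ℂ y (x - x') : ℂ) • y + (inner ℂ (y - y') x' : ℂ) • y‖
        + ‖(inner ℂ y' x' : ℂ) • (y - y')‖) := by gcongr; exact norm_add_le _ _
    _ ≤ ‖x - x'‖ + (‖(inner ℂ y (x - x') : ℂ) • y‖ + ‖(inner ℂ (y - y') x' : ℂ) • y‖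
        + ‖(inner ℂ y' x' : ℂ) • (y - y')‖) := by gcongr; exact norm_add_le _ _
    _ ≤ 2 * ‖x - x'‖ + 2 * ‖y - y'‖ := by linarith

lemma sum_abs_sq_sub_le {n : ℕ} (u w : EuclideanSpace ℂ (Fin n)) :
    ∑ i, |‖u i‖ ^ 2 - ‖w i‖ ^ 2| ≤ (‖u‖ + ‖w‖) * ‖u - w‖ := by
  have hterm : ∀ i, |‖u i‖ ^ 2 - ‖w i‖ ^ 2| ≤
      (‖u i‖ + ‖w i‖) * ‖u i - w i‖ := by
    intro i
    have h : |‖u i‖ - ‖w i‖| ≤ ‖u i - w i‖ := by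
      simpa using abs_norm_sub_norm_le (u i) (w i)
    have h2 : |‖u i‖ ^ 2 - ‖w i‖ ^ 2|
        = (‖u i‖ + ‖w i‖) * |‖u i‖ - ‖w i‖| := by
      rw [← abs_of_nonneg (by positivity : (0:ℝ) ≤ ‖u i‖ + ‖w i‖),
        ← abs_mul]
      ring_nf
    rw [h2]
    gcongr
  have hu2 : ∑ i, ‖u i‖ ^ 2 = ‖u‖^2 := by
    rw [EuclideanSpace.norm_eq, Real.sq_sqrt (by positivity)]
  have hw2 : ∑ i, ‖w i‖ ^ 2 = ‖w‖^2 := by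
    rw [EuclideanSpace.norm_eq, Real.sq_sqrt (by positivity)]
  have hd2 : ∑ i, ‖u i - w i‖ ^ 2 = ‖u - w‖^2 := by
    rw [EuclideanSpace.norm_eq, Real.sq_sqrt (by positivity)]
    simp
  have cs1 : ∑ i, ‖u i‖ * ‖w i‖ ≤ ‖u‖ * ‖w‖ := by
    have h := Real.sum_mul_le_sqrt_mul_sqrt Finset.univ
      (fun i => ‖u i‖) (fun i => ‖w i‖)
    rwa [hu2, hw2, Real.sqrt_sq (norm_nonneg u), Real.sqrt_sq (norm_nonneg w)] at h
  have cs2 : ∑ i, (‖u i‖ + ‖w i‖) * ‖u i - w i‖ ≤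
      Real.sqrt (∑ i, (‖u i‖ + ‖w i‖)^2) * ‖u - w‖ := by
    have h := Real.sum_mul_le_sqrt_mul_sqrt Finset.univ
      (fun i => ‖u i‖ + ‖w i‖) (fun i => ‖u i - w i‖)
    rwa [hd2, Real.sqrt_sq (norm_nonneg _)] at h
  have hsum : ∑ i, (‖u i‖ + ‖w i‖)^2 ≤ (‖u‖ + ‖w‖)^2 := by
    have : ∑ i, (‖u i‖ + ‖w i‖)^2
        = (∑ i, ‖u i‖^2) + 2 * (∑ i, ‖u i‖ * ‖w i‖)
          + ∑ i, ‖w i‖^2 := by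
      rw [Finset.mul_sum, ← Finset.sum_add_distrib, ← Finset.sum_add_distrib]
      exact Finset.sum_congr rfl fun i _ => by ring
    rw [this, hu2, hw2]
    nlinarith [cs1]
  have hsqrt : Real.sqrt (∑ i, (‖u i‖ + ‖w i‖)^2) ≤ ‖u‖ + ‖w‖ := by
    have h := Real.sqrt_le_sqrt hsum
    rwa [Real.sqrt_sq (by positivity)] at h
  calc ∑ i, |‖u i‖ ^ 2 - ‖w i‖ ^ 2|
      ≤ ∑ i, (‖u i‖ + ‖w i‖) * ‖u i - w i‖ :=
        Finset.sum_le_sum fun i _ => hterm i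
    _ ≤ Real.sqrt (∑ i, (‖u i‖ + ‖w i‖)^2) * ‖u - w‖ := cs2
    _ ≤ (‖u‖ + ‖w‖) * ‖u - w‖ := by gcongr

/-- `F̃` is Lipschitz with constant `20·√(c₁/c₂)/√n` on `ℂⁿ × ℂⁿ`. -/
theorem Ftil_lipschitz (n : ℕ) (hn : 0 < n) (c₁ c₂ lam : ℝ)
    (hc₁ : 1 ≤ c₁) (hc₂0 : 0 < c₂) (hc₂1 : c₂ ≤ 1) (hlam : lam ∈ Set.Icc (0 : ℝ) 1)
    (ζ₁ ζ₂ z₁ z₂ : EuclideanSpace ℂ (Fin n)) :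
    |Ftil c₁ c₂ lam ζ₁ z₁ - Ftil c₁ c₂ lam ζ₂ z₂| ≤
      20 * Real.sqrt (c₁ / c₂) / Real.sqrt n *
        Real.sqrt (‖ζ₁ - ζ₂‖ ^ 2 + ‖z₁ - z₂‖ ^ 2) := by
  obtain ⟨hlam0, hlam1⟩ := hlam
  have hc₁0 : (0:ℝ) < c₁ := lt_of_lt_of_le one_pos hc₁
  have hn0 : (0:ℝ) < (n:ℝ) := by exact_mod_cast hn
  set m₁ := Real.sqrt ((n:ℝ)/c₁) with hm₁def
  set m₂ := Real.sqrt c₂ with hm₂def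
  have hm₁ : 0 < m₁ := Real.sqrt_pos.2 (div_pos hn0 hc₁0)
  have hm₂ : 0 < m₂ := Real.sqrt_pos.2 hc₂0
  have e1 : ∀ x : EuclideanSpace ℂ (Fin n), v1 c₁ x = (max ‖x‖ m₁)⁻¹ • x := by
    intro x; rw [hm₁def]; rfl
  have e2 : ∀ x : EuclideanSpace ℂ (Fin n), v2 c₂ x = (max ‖x‖ m₂)⁻¹ • x := by
    intro x; rw [hm₂def]; rfl
  -- norm bounds
  have hb1 : ∀ x : EuclideanSpace ℂ (Fin n), ‖v1 c₁ x‖ ≤ 1 := by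
    intro x; rw [e1]; exact clamp_norm_le m₁ hm₁ x
  have hb2 : ∀ x : EuclideanSpace ℂ (Fin n), ‖v2 c₂ x‖ ≤ 1 := by
    intro x; rw [e2]; exact clamp_norm_le m₂ hm₂ x
  -- Lipschitz bounds
  have hL1 : ∀ x y : EuclideanSpace ℂ (Fin n), ‖v1 c₁ x - v1 c₁ y‖ ≤ m₁⁻¹ * ‖x - y‖ := by
    intro x y; rw [e1, e1]; exact clamp_lip m₁ hm₁ x y
  have hL2 : ∀ x y : EuclideanSpace ℂ (Fin n), ‖v2 c₂ x - v2 c₂ y‖ ≤ m₂⁻¹ * ‖x - y‖ := by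
    intro x y; rw [e2, e2]; exact clamp_lip m₂ hm₂ x y
  set T₁ := tGS (v1 c₁ ζ₁) (v1 c₁ z₁) with hT₁def
  set T₂ := tGS (v1 c₁ ζ₂) (v1 c₁ z₂) with hT₂def
  have hTd : ‖T₁ - T₂‖ ≤ 2 * (m₁⁻¹ * ‖ζ₁ - ζ₂‖) + 2 * (m₁⁻¹ * ‖z₁ - z₂‖) := by
    refine (tGS_lip _ _ _ _ (hb1 ζ₁) (hb1 ζ₂) (hb1 z₁) (hb1 z₂)).trans ?_
    have h1 := hL1 ζ₁ ζ₂
    have h2 := hL1 z₁ z₂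
    linarith
  -- step 1 : the sum decomposition
  have hstep : |Ftil c₁ c₂ lam ζ₁ z₁ - Ftil c₁ c₂ lam ζ₂ z₂| ≤
      (∑ i, |‖v1 c₁ z₁ i‖ ^ 2 - ‖v1 c₁ z₂ i‖ ^ 2|)
      + lam * ∑ i, |‖v2 c₂ T₁ i‖ ^ 2 - ‖v2 c₂ T₂ i‖ ^ 2| := by
    simp only [Ftil, ← hT₁def, ← hT₂def]
    rw [← Finset.sum_sub_distrib, Finset.mul_sum, ← Finset.sum_add_distrib]
    refine (Finset.abs_sum_le_sum_abs _ _).trans (Finset.sum_le_sum fun i _ => ?_)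
    set A₁ := ‖v1 c₁ z₁ i‖ ^ 2
    set A₂ := ‖v1 c₁ z₂ i‖ ^ 2
    set B₁ := ‖v2 c₂ T₁ i‖ ^ 2
    set B₂ := ‖v2 c₂ T₂ i‖ ^ 2
    calc |(|A₁ - lam * B₁|) - (|A₂ - lam * B₂|)|
        ≤ |(A₁ - lam * B₁) - (A₂ - lam * B₂)| := abs_abs_sub_abs_le_abs_sub _ _
      _ = |(A₁ - A₂) - lam * (B₁ - B₂)| := by congr 1; ring
      _ ≤ |A₁ - A₂| + |lam * (B₁ - B₂)| := abs_sub _ _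
      _ = |A₁ - A₂| + lam * |B₁ - B₂| := by rw [abs_mul, abs_of_nonneg hlam0]
  -- bounds on the two sums
  have hA' : (∑ i, |‖v1 c₁ z₁ i‖ ^ 2 - ‖v1 c₁ z₂ i‖ ^ 2|)
      ≤ 2 * (m₁⁻¹ * ‖z₁ - z₂‖) := by
    refine (sum_abs_sq_sub_le _ _).trans ?_
    have h := hL1 z₁ z₂
    have h1 := hb1 z₁
    have h2 := hb1 z₂
    calc (‖v1 c₁ z₁‖ + ‖v1 c₁ z₂‖) * ‖v1 c₁ z₁ - v1 c₁ z₂‖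
        ≤ (1 + 1) * (m₁⁻¹ * ‖z₁ - z₂‖) :=
          mul_le_mul (by linarith) h (norm_nonneg _) (by norm_num)
      _ = 2 * (m₁⁻¹ * ‖z₁ - z₂‖) := by norm_num
  have hB' : (∑ i, |‖v2 c₂ T₁ i‖ ^ 2 - ‖v2 c₂ T₂ i‖ ^ 2|)
      ≤ 2 * (m₂⁻¹ * (2 * (m₁⁻¹ * ‖ζ₁ - ζ₂‖) + 2 * (m₁⁻¹ * ‖z₁ - z₂‖))) := by
    refine (sum_abs_sq_sub_le _ _).trans ?_
    have h := (hL2 T₁ T₂).trans (mul_le_mul_of_nonneg_left hTd (by positivity))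
    have h1 := hb2 T₁
    have h2 := hb2 T₂
    calc (‖v2 c₂ T₁‖ + ‖v2 c₂ T₂‖) * ‖v2 c₂ T₁ - v2 c₂ T₂‖
        ≤ (1 + 1) * (m₂⁻¹ * (2 * (m₁⁻¹ * ‖ζ₁ - ζ₂‖) + 2 * (m₁⁻¹ * ‖z₁ - z₂‖))) :=
          mul_le_mul (by linarith) h (norm_nonneg _) (by norm_num)
      _ = _ := by norm_num
  -- the distance D
  set D := Real.sqrt (‖ζ₁ - ζ₂‖ ^ 2 + ‖z₁ - z₂‖ ^ 2) with hDdef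
  have hD0 : 0 ≤ D := Real.sqrt_nonneg _
  have hDζ : ‖ζ₁ - ζ₂‖ ≤ D := by
    calc ‖ζ₁ - ζ₂‖ = Real.sqrt (‖ζ₁ - ζ₂‖ ^ 2) := (Real.sqrt_sq (norm_nonneg _)).symm
      _ ≤ D := by
          rw [hDdef]
          exact Real.sqrt_le_sqrt (le_add_of_nonneg_right (sq_nonneg _))
  have hDz : ‖z₁ - z₂‖ ≤ D := by
    calc ‖z₁ - z₂‖ = Real.sqrt (‖z₁ - z₂‖ ^ 2) := (Real.sqrt_sq (norm_nonneg _)).symm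
      _ ≤ D := by
          rw [hDdef]
          exact Real.sqrt_le_sqrt (le_add_of_nonneg_left (sq_nonneg _))
  -- constant computation
  have hsn : Real.sqrt (n : ℝ) ≠ 0 := ne_of_gt (Real.sqrt_pos.2 hn0)
  have hsc₁ : Real.sqrt c₁ ≠ 0 := ne_of_gt (Real.sqrt_pos.2 hc₁0)
  have hK : Real.sqrt (c₁ / c₂) / Real.sqrt (n : ℝ) = m₁⁻¹ * m₂⁻¹ := by
    rw [hm₁def, hm₂def, Real.sqrt_div (le_of_lt hc₁0), Real.sqrt_div (le_of_lt hn0)]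
    field_simp
  -- final assembly
  have hm2inv : (1:ℝ) ≤ m₂⁻¹ := by
    have hmm : m₂ * m₂⁻¹ = 1 := mul_inv_cancel₀ (ne_of_gt hm₂)
    have hle : m₂ ≤ 1 := by rw [hm₂def]; exact Real.sqrt_le_one.mpr hc₂1
    nlinarith [inv_pos.2 hm₂]
  have hPζ : m₁⁻¹ * ‖ζ₁ - ζ₂‖ ≤ m₁⁻¹ * D := by gcongr
  have hPz : m₁⁻¹ * ‖z₁ - z₂‖ ≤ m₁⁻¹ * D := by gcongr
  have h2 : 2 * (m₂⁻¹ * (2 * (m₁⁻¹ * ‖ζ₁ - ζ₂‖) + 2 * (m₁⁻¹ * ‖z₁ - z₂‖)))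
      ≤ 8 * (m₁⁻¹ * m₂⁻¹ * D) := by
    calc 2 * (m₂⁻¹ * (2 * (m₁⁻¹ * ‖ζ₁ - ζ₂‖) + 2 * (m₁⁻¹ * ‖z₁ - z₂‖)))
        ≤ 2 * (m₂⁻¹ * (2 * (m₁⁻¹ * D) + 2 * (m₁⁻¹ * D))) := by gcongr
      _ = 8 * (m₁⁻¹ * m₂⁻¹ * D) := by ring
  have h3 : lam * (∑ i, |‖v2 c₂ T₁ i‖ ^ 2 - ‖v2 c₂ T₂ i‖ ^ 2|)
      ≤ 8 * (m₁⁻¹ * m₂⁻¹ * D) := by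
    have hBnn : (0:ℝ) ≤ ∑ i, |‖v2 c₂ T₁ i‖ ^ 2 - ‖v2 c₂ T₂ i‖ ^ 2| :=
      Finset.sum_nonneg fun i _ => abs_nonneg _
    calc lam * _ ≤ 1 * (∑ i, |‖v2 c₂ T₁ i‖ ^ 2 - ‖v2 c₂ T₂ i‖ ^ 2|) :=
          mul_le_mul_of_nonneg_right hlam1 hBnn
      _ = _ := one_mul _
      _ ≤ 2 * (m₂⁻¹ * (2 * (m₁⁻¹ * ‖ζ₁ - ζ₂‖) + 2 * (m₁⁻¹ * ‖z₁ - z₂‖))) := hB'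
      _ ≤ 8 * (m₁⁻¹ * m₂⁻¹ * D) := h2
  have h4 : 2 * (m₁⁻¹ * D) ≤ 2 * (m₁⁻¹ * m₂⁻¹ * D) := by
    nlinarith [hm2inv, mul_nonneg (le_of_lt (inv_pos.2 hm₁)) hD0]
  have h5 : (0:ℝ) ≤ m₁⁻¹ * m₂⁻¹ * D := by positivity
  have hfinal : |Ftil c₁ c₂ lam ζ₁ z₁ - Ftil c₁ c₂ lam ζ₂ z₂| ≤ 20 * (m₁⁻¹ * m₂⁻¹) * D := by
    have hA'' : (∑ i, |‖v1 c₁ z₁ i‖ ^ 2 - ‖v1 c₁ z₂ i‖ ^ 2|)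
        ≤ 2 * (m₁⁻¹ * D) := hA'.trans (by linarith)
    linarith [hstep, hA'', h3, h4, h5]
  calc |Ftil c₁ c₂ lam ζ₁ z₁ - Ftil c₁ c₂ lam ζ₂ z₂| ≤ 20 * (m₁⁻¹ * m₂⁻¹) * D := hfinal
    _ = 20 * Real.sqrt (c₁ / c₂) / Real.sqrt (n : ℝ) * D := by
        rw [show (20:ℝ) * Real.sqrt (c₁ / c₂) / Real.sqrt (n : ℝ)
          = 20 * (Real.sqrt (c₁ / c₂) / Real.sqrt (n : ℝ)) by ring, hK]
end
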